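/- arXiv:2109.11472 — 6 statements merged into one kernel-verified Lean document; each statement's English description precedes it below -/
import Mathlib

section
/- Let d ≥ 1 and α ∈ (d, ∞), and consider discrete long-range percolation on ℤ^d with connection function g(z) = 1 − exp(−‖z‖₁^{−α}). Then there exist constants 0 < κ₁, κ₁' < ∞ such that, with c_n = n^{d/(α−d)}, for every r ∈ (0, ∞): limsup_{n→∞} P(e_n* ≤ c_n r) ≤ exp(−κ₁ r^{d−α}) and liminf_{n→∞} P(e_n* ≤ c_n r) ≥ exp(−κ₁' r^{d−α}). -/
open MeasureTheory ProbabilityTheory Filter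
open scoped ENNReal

noncomputable section

namespace LRP

/-- The 1-norm distance between two points of `ℤ^d`, as a real number. -/
def dist1 {d : ℕ} (x y : Fin d → ℤ) : ℝ := ∑ i, |(x i : ℝ) - (y i : ℝ)|

/-- The observation window `B_n = [-n, n]^d ∩ ℤ^d`. -/
def window (d n : ℕ) : Finset (Fin d → ℤ) :=
  Finset.Icc (fun _ => -(n : ℤ)) fun _ => (n : ℤ)

open scoped Classical in
/-- The number of exceedances `W(n)` at level `rn`: the number of points `x` of the window
which are an endpoint of an edge of length `> rn`. -/
def numExceed {d : ℕ} {Ω : Type*} (Edge : Sym2 (Fin d → ℤ) → Set Ω) (n : ℕ) (rn : ℝ)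
    (ω : Ω) : ℕ :=
  ((window d n).filter fun x => ∃ y, ω ∈ Edge s(x, y) ∧ rn < dist1 x y).card

/-- The length `e_n^*` of the longest edge with at least one endpoint in the window. -/
def maxEdge {d : ℕ} {Ω : Type*} (Edge : Sym2 (Fin d → ℤ) → Set Ω) (n : ℕ) (ω : Ω) : ℝ≥0∞ :=
  ⨆ x ∈ window d n, ⨆ y : Fin d → ℤ,
    (Edge s(x, y)).indicator (fun _ => ENNReal.ofReal (dist1 x y)) ω

/-- The `ℕ`-valued random variables `W n` converge in distribution to a Poisson random
variable with parameter `μ`. -/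
def TendstoPoisson {Ω : Type*} [MeasurableSpace Ω] (P : Measure Ω) (W : ℕ → Ω → ℕ)
    (μ : ℝ) : Prop :=
  ∀ k : ℕ, Tendsto (fun n => (P {ω | W n ω = k}).toReal) atTop
    (nhds (Real.exp (-μ) * μ ^ k / (Nat.factorial k)))

end LRP

open LRP

namespace LRPaux

variable {d : ℕ}

lemma dist1_nonneg (x y : Fin d → ℤ) : 0 ≤ dist1 x y :=
  Finset.sum_nonneg fun i _ => abs_nonneg _

lemma dist1_comm (x y : Fin d → ℤ) : dist1 x y = dist1 y x :=
  Finset.sum_congr rfl fun i _ => abs_sub_comm _ _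

def natnorm (z : Fin d → ℤ) : ℕ := ∑ i, (z i).natAbs

lemma dist1_eq_natnorm (x y : Fin d → ℤ) : dist1 x y = (natnorm (x - y) : ℝ) := by
  unfold dist1 natnorm
  rw [Nat.cast_sum]
  refine Finset.sum_congr rfl fun i _ => ?_
  rw [Nat.cast_natAbs, Pi.sub_apply]
  push_cast
  rfl

lemma dist1_add (x z : Fin d → ℤ) : dist1 x (x + z) = ∑ i, |(z i : ℝ)| := by
  unfold dist1
  refine Finset.sum_congr rfl fun i _ => ?_
  rw [Pi.add_apply]
  push_cast
  rw [abs_sub_comm]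
  ring_nf

lemma natAbs_le_natnorm (z : Fin d → ℤ) (i : Fin d) : (z i).natAbs ≤ natnorm z :=
  Finset.single_le_sum (f := fun j => (z j).natAbs) (fun j _ => Nat.zero_le _) (Finset.mem_univ i)

/-- The weight function on unordered pairs. -/
def wt (α : ℝ) : Sym2 (Fin d → ℤ) → ℝ :=
  Sym2.lift ⟨fun x y => dist1 x y ^ (-α), fun x y => by simp only [dist1_comm]⟩

lemma wt_mk (α : ℝ) (x y : Fin d → ℤ) : wt α s(x, y) = dist1 x y ^ (-α) := rfl

lemma wt_nonneg (α : ℝ) (p : Sym2 (Fin d → ℤ)) : 0 ≤ wt α p := by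
  induction p using Sym2.ind with
  | _ x y => exact Real.rpow_nonneg (dist1_nonneg x y) _


/-- dyadic fiber bound -/
lemma fiber_bound {α : ℝ} (hα : (d : ℝ) < α) (M : ℕ) (hM : 1 ≤ M) (j : ℕ)
    (S : Finset (Fin d → ℤ))
    (hlow : ∀ z ∈ S, 2 ^ j * M ≤ natnorm z) (hup : ∀ z ∈ S, natnorm z < 2 ^ (j + 1) * M) :
    ∑ z ∈ S, (natnorm z : ℝ) ^ (-α) ≤
      (5 : ℝ) ^ d * ((2 : ℝ) ^ ((d : ℝ) - α)) ^ j * (M : ℝ) ^ ((d : ℝ) - α) := by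
  have hαpos : (0 : ℝ) < α := lt_of_le_of_lt (Nat.cast_nonneg d) hα
  set N : ℕ := 2 ^ j * M with hN
  have hNpos : 0 < N := Nat.mul_pos (Nat.pow_pos (by norm_num)) hM
  have hNR : (0 : ℝ) < N := by exact_mod_cast hNpos
  have hpow : 2 ^ (j + 1) * M = 2 * N := by rw [hN]; ring
  -- each term ≤ N ^ (-α)
  have hterm : ∀ z ∈ S, (natnorm z : ℝ) ^ (-α) ≤ (N : ℝ) ^ (-α) := by
    intro z hz
    refine Real.rpow_le_rpow_of_nonpos hNR ?_ (by linarith)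
    exact_mod_cast hlow z hz
  -- card bound: S ⊆ box of radius 2N
  have hcard : S.card ≤ (4 * N + 1) ^ d := by
    have hsub : S ⊆ Finset.Icc (fun _ : Fin d => -(2 * N : ℤ)) (fun _ => (2 * N : ℤ)) := by
      intro z hz
      have hz2 : natnorm z ≤ 2 * N := by have := hup z hz; omega
      rw [Finset.mem_Icc]
      constructor <;> intro i <;>
        [skip; skip] <;>
        · have h1 : (z i).natAbs ≤ 2 * N := le_trans (natAbs_le_natnorm z i) hz2
          simp only [Pi.neg_apply]
          omega
    calc S.card ≤ _ := Finset.card_le_card hsub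
    _ ≤ (4 * N + 1) ^ d := by
        rw [Pi.card_Icc]
        rw [Finset.prod_const]
        rw [Finset.card_univ, Fintype.card_fin]
        apply Nat.pow_le_pow_left
        rw [Int.card_Icc]
        omega
  -- combine
  calc ∑ z ∈ S, (natnorm z : ℝ) ^ (-α) ≤ S.card • ((N : ℝ) ^ (-α)) :=
        Finset.sum_le_card_nsmul _ _ _ hterm
  _ = (S.card : ℝ) * (N : ℝ) ^ (-α) := by rw [nsmul_eq_mul]
  _ ≤ ((4 * N + 1 : ℕ) ^ d : ℝ) * (N : ℝ) ^ (-α) := by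
      apply mul_le_mul_of_nonneg_right _ (Real.rpow_nonneg hNR.le _)
      exact_mod_cast hcard
  _ ≤ ((5 * N : ℝ)) ^ d * (N : ℝ) ^ (-α) := by
      apply mul_le_mul_of_nonneg_right _ (Real.rpow_nonneg hNR.le _)
      apply pow_le_pow_left₀ (by positivity)
      push_cast
      have : (1 : ℝ) ≤ N := by exact_mod_cast hNpos
      linarith
  _ = (5 : ℝ) ^ d * ((N : ℝ) ^ (d : ℕ) * (N : ℝ) ^ (-α)) := by rw [mul_pow]; ring
  _ = (5 : ℝ) ^ d * (N : ℝ) ^ ((d : ℝ) - α) := by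
      rw [← Real.rpow_natCast (N : ℝ) d, ← Real.rpow_add hNR, sub_eq_add_neg]
  _ = (5 : ℝ) ^ d * ((2 : ℝ) ^ ((d : ℝ) - α)) ^ j * (M : ℝ) ^ ((d : ℝ) - α) := by
      rw [hN]
      push_cast
      rw [Real.mul_rpow (by positivity) (Nat.cast_nonneg M)]
      rw [← Real.rpow_natCast (2 : ℝ) j, ← Real.rpow_mul (by norm_num), mul_comm (j : ℝ),
        Real.rpow_mul (by norm_num), Real.rpow_natCast]
      ring


lemma tail_sum_le_z {d : ℕ} {α : ℝ} (hα : (d : ℝ) < α) {R : ℝ} (hR : 1 ≤ R)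
    (S : Finset (Fin d → ℤ)) (hS : ∀ z ∈ S, R < (natnorm z : ℝ)) :
    ∑ z ∈ S, (natnorm z : ℝ) ^ (-α) ≤
      (5 : ℝ) ^ d * (1 - (2 : ℝ) ^ ((d : ℝ) - α))⁻¹ * R ^ ((d : ℝ) - α) := by
  classical
  set M : ℕ := ⌊R⌋₊ + 1 with hMdef
  have hM1 : 1 ≤ M := Nat.le_add_left 1 _
  have hRM : R < (M : ℕ) := by
    rw [hMdef]; push_cast; exact Nat.lt_floor_add_one R
  have hMcast : R ≤ (M : ℝ) := le_of_lt (by exact_mod_cast hRM)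
  have hRpos : (0 : ℝ) < R := lt_of_lt_of_le one_pos hR
  have hMle : ∀ z ∈ S, M ≤ natnorm z := by
    intro z hz
    have := hS z hz
    rw [hMdef]
    have : ⌊R⌋₊ < natnorm z := (Nat.floor_lt hRpos.le).mpr this
    omega
  set x : ℝ := (2 : ℝ) ^ ((d : ℝ) - α) with hxdef
  have hx0 : 0 ≤ x := Real.rpow_nonneg (by norm_num) _
  have hx1 : x < 1 := Real.rpow_lt_one_of_one_lt_of_neg (by norm_num) (by linarith)
  -- fiber decomposition
  set jf : (Fin d → ℤ) → ℕ := fun z => Nat.log 2 (natnorm z / M) with hjf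
  rw [← Finset.sum_fiberwise_of_maps_to (g := jf) (t := S.image jf)
    (fun z hz => Finset.mem_image_of_mem _ hz)]
  have hfiber : ∀ j ∈ S.image jf,
      ∑ z ∈ S.filter (fun z => jf z = j), (natnorm z : ℝ) ^ (-α) ≤
        (5 : ℝ) ^ d * x ^ j * (M : ℝ) ^ ((d : ℝ) - α) := by
    intro j _
    apply fiber_bound hα M hM1 j
    · intro z hz
      rw [Finset.mem_filter] at hz
      obtain ⟨hzS, hzj⟩ := hz
      have h1 : M ≤ natnorm z := hMle z hzS
      have h2 : 1 ≤ natnorm z / M := (Nat.one_le_div_iff (by omega)).mpr h1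
      have h3 : 2 ^ j ≤ natnorm z / M := by
        rw [← hzj, hjf]
        exact Nat.pow_log_le_self 2 (by omega)
      calc 2 ^ j * M ≤ (natnorm z / M) * M := Nat.mul_le_mul_right _ h3
      _ ≤ natnorm z := Nat.div_mul_le_self _ _
    · intro z hz
      rw [Finset.mem_filter] at hz
      obtain ⟨hzS, hzj⟩ := hz
      have h4 : natnorm z / M < 2 ^ (j + 1) := by
        rw [← hzj, hjf]
        exact Nat.lt_pow_succ_log_self (by norm_num) _
      have h6 : natnorm z % M < M := Nat.mod_lt _ (by omega)
      calc natnorm z = M * (natnorm z / M) + natnorm z % M := (Nat.div_add_mod _ _).symm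
      _ < M * (natnorm z / M) + M := Nat.add_lt_add_left h6 _
      _ = (natnorm z / M + 1) * M := by ring
      _ ≤ 2 ^ (j + 1) * M := Nat.mul_le_mul_right _ (by omega)
  calc ∑ j ∈ S.image jf, ∑ z ∈ S.filter (fun z => jf z = j), (natnorm z : ℝ) ^ (-α)
      ≤ ∑ j ∈ S.image jf, (5 : ℝ) ^ d * x ^ j * (M : ℝ) ^ ((d : ℝ) - α) :=
        Finset.sum_le_sum hfiber
  _ = (5 : ℝ) ^ d * (M : ℝ) ^ ((d : ℝ) - α) * ∑ j ∈ S.image jf, x ^ j := by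
      rw [Finset.mul_sum]; apply Finset.sum_congr rfl; intro j _; ring
  _ ≤ (5 : ℝ) ^ d * (M : ℝ) ^ ((d : ℝ) - α) * (1 - x)⁻¹ := by
      apply mul_le_mul_of_nonneg_left _ (by positivity)
      calc ∑ j ∈ S.image jf, x ^ j ≤ ∑' j : ℕ, x ^ j :=
            (summable_geometric_of_lt_one hx0 hx1).sum_le_tsum _ (fun j _ => pow_nonneg hx0 _)
      _ = (1 - x)⁻¹ := tsum_geometric_of_lt_one hx0 hx1
  _ ≤ (5 : ℝ) ^ d * (1 - x)⁻¹ * R ^ ((d : ℝ) - α) := by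
      have hMR : (M : ℝ) ^ ((d : ℝ) - α) ≤ R ^ ((d : ℝ) - α) :=
        Real.rpow_le_rpow_of_nonpos hRpos hMcast (by linarith)
      have h1x : 0 < 1 - x := by linarith
      calc (5 : ℝ) ^ d * (M : ℝ) ^ ((d : ℝ) - α) * (1 - x)⁻¹
          = (5:ℝ)^d * (1-x)⁻¹ * (M : ℝ) ^ ((d : ℝ) - α) := by ring
      _ ≤ _ := by
          apply mul_le_mul_of_nonneg_left hMR (by positivity)


lemma tail_sum_le {α : ℝ} (hα : (d : ℝ) < α) {R : ℝ} (hR : 1 ≤ R)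
    (x : Fin d → ℤ) (S : Finset (Fin d → ℤ)) (hS : ∀ y ∈ S, R < dist1 x y) :
    ∑ y ∈ S, dist1 x y ^ (-α) ≤
      (5 : ℝ) ^ d * (1 - (2 : ℝ) ^ ((d : ℝ) - α))⁻¹ * R ^ ((d : ℝ) - α) := by
  have hinj : ∀ y ∈ S, ∀ y' ∈ S, x - y = x - y' → y = y' := by
    intro y _ y' _ h
    have h2 : y - y' = 0 := by
      have : (x - y) - (x - y') = 0 := by rw [h, sub_self]
      calc y - y' = (x - y') - (x - y) := by abel
      _ = -((x-y)-(x-y')) := by abel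
      _ = 0 := by rw [this, neg_zero]
    have := sub_eq_zero.mp h2
    exact this
  have heq : ∑ z ∈ S.image (fun y => x - y), (natnorm z : ℝ) ^ (-α)
      = ∑ y ∈ S, (natnorm (x - y) : ℝ) ^ (-α) := Finset.sum_image hinj
  calc ∑ y ∈ S, dist1 x y ^ (-α)
      = ∑ z ∈ S.image (fun y => x - y), (natnorm z : ℝ) ^ (-α) := by
        rw [heq]
        exact Finset.sum_congr rfl fun y _ => by rw [dist1_eq_natnorm]
  _ ≤ _ := by
      apply tail_sum_le_z hα hR
      intro z hz
      rw [Finset.mem_image] at hz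
      obtain ⟨y, hy, rfl⟩ := hz
      rw [← dist1_eq_natnorm]
      exact hS y hy


/-- Upper bound for any finite collection of long pairs meeting the window. -/
lemma finite_sum_wt_le {α : ℝ} (hα : (d : ℝ) < α) {n : ℕ} {R : ℝ} (hR : 1 ≤ R)
    (F : Finset (Sym2 (Fin d → ℤ)))
    (hF : ∀ p ∈ F, ∃ x ∈ window d n, ∃ y, p = s(x, y) ∧ R < dist1 x y) :
    ∑ p ∈ F, wt α p ≤
      ((window d n).card : ℝ) *
        ((5 : ℝ) ^ d * (1 - (2 : ℝ) ^ ((d : ℝ) - α))⁻¹ * R ^ ((d : ℝ) - α)) := by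
  classical
  have hch : ∀ p : F, ∃ q : (Fin d → ℤ) × (Fin d → ℤ),
      q.1 ∈ window d n ∧ R < dist1 q.1 q.2 ∧ s(q.1, q.2) = (p : Sym2 (Fin d → ℤ)) := by
    rintro ⟨p, hp⟩
    obtain ⟨x, hx, y, hpxy, hdist⟩ := hF p hp
    exact ⟨(x, y), hx, hdist, hpxy.symm⟩
  choose q hq1 hq2 hq3 using hch
  have hqinj : Function.Injective q := by
    intro p p' h
    have : s((q p).1, (q p).2) = s((q p').1, (q p').2) := by rw [h]
    rw [hq3, hq3] at this
    exact Subtype.ext this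
  set G : Finset ((Fin d → ℤ) × (Fin d → ℤ)) := F.attach.image q with hG
  have hsum1 : ∑ p ∈ F, wt α p = ∑ g ∈ G, dist1 g.1 g.2 ^ (-α) := by
    rw [hG, Finset.sum_image (fun a _ b _ h => hqinj h)]
    rw [← Finset.sum_attach F (fun p => wt α p)]
    refine Finset.sum_congr rfl fun p _ => ?_
    rw [← hq3 p, wt_mk]
  rw [hsum1]
  have hmaps : ∀ g ∈ G, g.1 ∈ window d n := by
    intro g hg
    rw [hG, Finset.mem_image] at hg
    obtain ⟨p, _, rfl⟩ := hg
    exact hq1 p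
  rw [← Finset.sum_fiberwise_of_maps_to (g := Prod.fst) hmaps]
  have hbound : ∀ x ∈ window d n,
      ∑ g ∈ G.filter (fun g => g.1 = x), dist1 g.1 g.2 ^ (-α) ≤
        (5 : ℝ) ^ d * (1 - (2 : ℝ) ^ ((d : ℝ) - α))⁻¹ * R ^ ((d : ℝ) - α) := by
    intro x _
    set Gx := G.filter (fun g => g.1 = x) with hGx
    have hsnd : ∀ g ∈ Gx, ∀ g' ∈ Gx, g.2 = g'.2 → g = g' := by
      intro g hg g' hg' h
      rw [hGx, Finset.mem_filter] at hg hg'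
      exact Prod.ext (hg.2.trans hg'.2.symm) h
    have heq : ∑ g ∈ Gx, dist1 g.1 g.2 ^ (-α) = ∑ y ∈ Gx.image Prod.snd, dist1 x y ^ (-α) := by
      rw [Finset.sum_image hsnd]
      refine Finset.sum_congr rfl fun g hg => ?_
      rw [hGx, Finset.mem_filter] at hg
      rw [hg.2]
    rw [heq]
    apply tail_sum_le hα hR
    intro y hy
    rw [Finset.mem_image] at hy
    obtain ⟨g, hg, rfl⟩ := hy
    rw [hGx, Finset.mem_filter] at hg
    obtain ⟨hgG, hgx⟩ := hg
    rw [hG, Finset.mem_image] at hgG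
    obtain ⟨p, _, rfl⟩ := hgG
    rw [← hgx]
    exact hq2 p
  calc ∑ x ∈ window d n, ∑ g ∈ G.filter (fun g => g.1 = x), dist1 g.1 g.2 ^ (-α)
      ≤ (window d n).card • ((5 : ℝ) ^ d * (1 - (2 : ℝ) ^ ((d : ℝ) - α))⁻¹ * R ^ ((d : ℝ) - α)) :=
        Finset.sum_le_card_nsmul _ _ _ hbound
  _ = _ := by rw [nsmul_eq_mul]


/-- Construction of a finite family of long pairs with large total weight. -/
lemma exists_good_finset (hd : 1 ≤ d) {α : ℝ} (hα : (d : ℝ) < α) {n : ℕ} (hn : 1 ≤ n)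
    {R : ℝ} (hR : 1 ≤ R) :
    ∃ F : Finset (Sym2 (Fin d → ℤ)),
      (∀ p ∈ F, ∃ x ∈ window d n, ∃ y, p = s(x, y) ∧ R < dist1 x y) ∧
      (n : ℝ) ^ (d : ℕ) * R ^ (d : ℝ) * ((2 * ((d : ℝ) + 1) * R) ^ (-α)) ≤ ∑ p ∈ F, wt α p := by
  classical
  have hRpos : (0 : ℝ) < R := lt_of_lt_of_le one_pos hR
  set M : ℕ := ⌈R⌉₊ with hM
  have hM1 : 1 ≤ M := Nat.one_le_ceil_iff.mpr hRpos
  have hRM : R ≤ (M : ℝ) := Nat.le_ceil R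
  have hMR : (M : ℝ) ≤ 2 * R := by
    have := Nat.ceil_lt_add_one hRpos.le
    linarith
  set i0 : Fin d := ⟨0, hd⟩ with hi0
  set lo : Fin d → ℤ := fun i => if i = i0 then (M + 1 : ℤ) else 0 with hlo
  set up : Fin d → ℤ := fun i => if i = i0 then (2 * M : ℤ) else (M : ℤ) with hup
  set Z : Finset (Fin d → ℤ) := Finset.Icc lo up with hZ
  -- membership facts
  have hmemZ : ∀ z ∈ Z, ((M : ℤ) + 1 ≤ z i0 ∧ z i0 ≤ 2 * M) ∧
      ∀ i, i ≠ i0 → (0 ≤ z i ∧ z i ≤ M) := by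
    intro z hz
    rw [hZ, Finset.mem_Icc] at hz
    obtain ⟨h1, h2⟩ := hz
    constructor
    · constructor
      · have := h1 i0; rw [hlo] at this; simpa using this
      · have := h2 i0; rw [hup] at this; simpa using this
    · intro i hi'
      constructor
      · have := h1 i; rw [hlo] at this; simpa [hi'] using this
      · have := h2 i; rw [hup] at this; simpa [hi'] using this
  -- distance bounds for z ∈ Z
  have hdistlow : ∀ z ∈ Z, ∀ x : Fin d → ℤ, R < dist1 x (x + z) := by
    intro z hz x
    obtain ⟨⟨h1, _⟩, hrest⟩ := hmemZ z hz
    rw [dist1_add]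
    calc R ≤ (M : ℝ) := hRM
    _ < (M : ℝ) + 1 := by linarith
    _ ≤ |(z i0 : ℝ)| := by
        rw [abs_of_nonneg (by exact_mod_cast le_trans (by positivity) h1)]
        exact_mod_cast h1
    _ ≤ ∑ i, |(z i : ℝ)| :=
        Finset.single_le_sum (f := fun i => |(z i : ℝ)|) (fun i _ => abs_nonneg _)
          (Finset.mem_univ i0)
  have hdisthigh : ∀ z ∈ Z, ∀ x : Fin d → ℤ, dist1 x (x + z) ≤ 2 * ((d : ℝ) + 1) * R := by
    intro z hz x
    obtain ⟨⟨_, h2⟩, hrest⟩ := hmemZ z hz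
    rw [dist1_add]
    have hbound : ∀ i, |(z i : ℝ)| ≤ 2 * (M : ℝ) := by
      intro i
      have hzi : (0:ℤ) ≤ z i ∧ z i ≤ 2 * (M:ℤ) := by
        by_cases hii : i = i0
        · rw [hii]
          have ha1 := (hmemZ z hz).1.1
          have ha2 := (hmemZ z hz).1.2
          omega
        · obtain ⟨ha, hb⟩ := hrest i hii
          omega
      rw [abs_of_nonneg (by exact_mod_cast hzi.1)]
      have : ((z i : ℤ) : ℝ) ≤ ((2 * (M:ℤ) : ℤ) : ℝ) := by exact_mod_cast hzi.2
      push_cast at this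
      linarith
    have hB : ∑ i ∈ Finset.univ.erase i0, |(z i : ℝ)| ≤ ((d:ℝ)-1)*(M:ℝ) := by
      have hb2 : ∀ i ∈ Finset.univ.erase i0, |(z i : ℝ)| ≤ (M:ℝ) := by
        intro i hi2
        obtain ⟨ha, hb⟩ := hrest i (Finset.ne_of_mem_erase hi2)
        rw [abs_of_nonneg (by exact_mod_cast ha)]
        exact_mod_cast hb
      calc ∑ i ∈ Finset.univ.erase i0, |(z i : ℝ)| ≤ (Finset.univ.erase i0).card • (M:ℝ) :=
            Finset.sum_le_card_nsmul _ _ _ hb2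
      _ = ((d:ℝ)-1)*(M:ℝ) := by
          rw [Finset.card_erase_of_mem (Finset.mem_univ i0), Finset.card_univ, Fintype.card_fin,
            nsmul_eq_mul, Nat.cast_sub hd]
          push_cast
          ring
    calc ∑ i, |(z i : ℝ)|
        = |(z i0 : ℝ)| + ∑ i ∈ Finset.univ.erase i0, |(z i : ℝ)| :=
          (Finset.add_sum_erase Finset.univ (fun i => |(z i : ℝ)|) (Finset.mem_univ i0)).symm
    _ ≤ 2*(M:ℝ) + ((d:ℝ)-1)*(M:ℝ) := add_le_add (hbound i0) hB
    _ = ((d:ℝ)+1) * (M:ℝ) := by ring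
    _ ≤ 2 * ((d:ℝ)+1) * R := by nlinarith [Nat.cast_nonneg (α := ℝ) d]
  -- injectivity of the pairing map
  have hinj : ∀ q ∈ (window d n) ×ˢ Z, ∀ q' ∈ (window d n) ×ˢ Z,
      s(q.1, q.1 + q.2) = s(q'.1, q'.1 + q'.2) → q = q' := by
    rintro ⟨x, z⟩ hq ⟨x', z'⟩ hq' h
    rw [Finset.mem_product] at hq hq'
    have hz := hmemZ z hq.2
    have hz' := hmemZ z' hq'.2
    simp only [Sym2.eq_iff] at h
    rcases h with ⟨h1, h2⟩ | ⟨h1, h2⟩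
    · have hzz : z = z' := by
        have hx : x + z = x + z' := by rw [h1] at h2 ⊢; exact h2
        exact add_left_cancel hx
      rw [Prod.mk.injEq]
      exact ⟨h1, hzz⟩
    · exfalso
      have e : x + 0 = x + (z + z') := by
        rw [add_zero]
        calc x = x' + z' := h1
        _ = (x + z) + z' := by rw [h2]
        _ = x + (z + z') := by abel
      have hzz : (0 : Fin d → ℤ) = z + z' := add_left_cancel e
      have hcomp : z i0 + z' i0 = 0 := by
        have := congrFun hzz i0
        simpa using this.symm
      have hp1 : (M : ℤ) + 1 ≤ z i0 := hz.1.1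
      have hp2 : (M : ℤ) + 1 ≤ z' i0 := hz'.1.1
      omega
  set F : Finset (Sym2 (Fin d → ℤ)) :=
    ((window d n) ×ˢ Z).image (fun q => s(q.1, q.1 + q.2)) with hF
  refine ⟨F, ?_, ?_⟩
  · intro p hp
    rw [hF, Finset.mem_image] at hp
    obtain ⟨⟨x, z⟩, hq, rfl⟩ := hp
    rw [Finset.mem_product] at hq
    exact ⟨x, hq.1, x + z, rfl, hdistlow z hq.2 x⟩
  · have hsum : ∑ p ∈ F, wt α p = ∑ q ∈ (window d n) ×ˢ Z, dist1 q.1 (q.1 + q.2) ^ (-α) := by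
      rw [hF, Finset.sum_image hinj]
      exact Finset.sum_congr rfl fun q _ => rfl
    rw [hsum]
    have hterm : ∀ q ∈ (window d n) ×ˢ Z,
        (2 * ((d : ℝ) + 1) * R) ^ (-α) ≤ dist1 q.1 (q.1 + q.2) ^ (-α) := by
      rintro ⟨x, z⟩ hq
      rw [Finset.mem_product] at hq
      have h1 := hdistlow z hq.2 x
      have h2 := hdisthigh z hq.2 x
      exact Real.rpow_le_rpow_of_nonpos (lt_trans hRpos h1) h2
        (by
          have : (0:ℝ) ≤ (d:ℝ) := Nat.cast_nonneg d
          linarith)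
    have hcard : ((window d n) ×ˢ Z).card = (window d n).card * Z.card := Finset.card_product _ _
    calc (n : ℝ) ^ (d : ℕ) * R ^ (d : ℝ) * ((2 * ((d : ℝ) + 1) * R) ^ (-α))
        ≤ (((window d n) ×ˢ Z).card : ℝ) * ((2 * ((d : ℝ) + 1) * R) ^ (-α)) := by
          apply mul_le_mul_of_nonneg_right _ (Real.rpow_nonneg (by positivity) _)
          rw [hcard]
          push_cast
          have hwin : ((n : ℝ)) ^ (d : ℕ) ≤ ((window d n).card : ℝ) := by
            have : (window d n).card = (2 * n + 1) ^ d := by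
              rw [window, Pi.card_Icc, Finset.prod_const, Finset.card_univ, Fintype.card_fin]
              congr 1
              rw [Int.card_Icc]
              omega
            rw [this]
            push_cast
            apply pow_le_pow_left₀ (Nat.cast_nonneg n)
            push_cast
            linarith [(Nat.one_le_cast (α := ℝ)).mpr hn]
          have hZcard : R ^ (d : ℝ) ≤ (Z.card : ℝ) := by
            have hci : ∀ i : Fin d, M ≤ (Finset.Icc (lo i) (up i)).card := by
              intro i
              rw [Int.card_Icc]
              by_cases hii : i = i0
              · rw [hii]; simp only [hlo, hup, if_pos rfl]; omega
              · simp only [hlo, hup, if_neg hii]; omega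
            have hMd : M ^ d ≤ Z.card := by
              rw [hZ, Pi.card_Icc]
              calc M ^ d = ∏ _i : Fin d, M := by
                    rw [Finset.prod_const, Finset.card_univ, Fintype.card_fin]
              _ ≤ _ := Finset.prod_le_prod' fun i _ => hci i
            have hMd' : (M : ℝ) ^ (d : ℕ) ≤ (Z.card : ℝ) := by exact_mod_cast hMd
            calc R ^ (d : ℝ) ≤ (M : ℝ) ^ (d : ℝ) :=
                  Real.rpow_le_rpow hRpos.le hRM (Nat.cast_nonneg d)
            _ = (M : ℝ) ^ (d : ℕ) := Real.rpow_natCast _ _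
            _ ≤ _ := hMd'
          calc (n : ℝ) ^ (d:ℕ) * R ^ (d : ℝ) ≤ ((window d n).card : ℝ) * (Z.card : ℝ) := by
                apply mul_le_mul hwin hZcard (Real.rpow_nonneg hRpos.le _) (Nat.cast_nonneg _)
          _ = _ := by push_cast; ring
    _ ≤ ∑ q ∈ (window d n) ×ˢ Z, dist1 q.1 (q.1 + q.2) ^ (-α) := by
        have := Finset.card_nsmul_le_sum ((window d n) ×ˢ Z)
          (fun q => dist1 q.1 (q.1 + q.2) ^ (-α)) _ hterm
        rw [nsmul_eq_mul] at this
        exact this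


section Prob

variable {Ω : Type*} [MeasurableSpace Ω] (P : Measure Ω) [IsProbabilityMeasure P]
  (Edge : Sym2 (Fin d → ℤ) → Set Ω)

/-- The event that no long edge meets the window. -/
lemma event_eq {n : ℕ} {R : ℝ} (hR : 0 < R) :
    {ω | maxEdge Edge n ω ≤ ENNReal.ofReal R} =
      ⋂ p ∈ {p : Sym2 (Fin d → ℤ) |
        ∃ x ∈ window d n, ∃ y, p = s(x, y) ∧ R < dist1 x y}, (Edge p)ᶜ := by
  ext ω
  simp only [Set.mem_setOf_eq, Set.mem_iInter, Set.mem_compl_iff, maxEdge, iSup_le_iff]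
  constructor
  · rintro h p ⟨x, hx, y, rfl, hdist⟩ hmem
    have h1 := h x hx y
    rw [Set.indicator_of_mem hmem] at h1
    rw [ENNReal.ofReal_le_ofReal_iff hR.le] at h1
    exact absurd h1 (not_le.mpr hdist)
  · intro h x hx y
    by_cases hmem : ω ∈ Edge s(x, y)
    · rw [Set.indicator_of_mem hmem]
      rw [ENNReal.ofReal_le_ofReal_iff hR.le]
      by_contra hcon
      exact h s(x, y) ⟨x, hx, y, rfl, not_le.mp hcon⟩ hmem
    · rw [Set.indicator_of_notMem hmem]
      exact zero_le

variable {α : ℝ}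

/-- Measure of the complement of an edge event. -/
lemma compl_meas (hα : (0:ℝ) < α) (hMeas : ∀ p, MeasurableSet (Edge p))
    (hDiag : ∀ x, Edge s(x, x) = ∅)
    (hMarg : ∀ x y : Fin d → ℤ, x ≠ y →
      P (Edge s(x, y)) = ENNReal.ofReal (1 - Real.exp (-(dist1 x y ^ (-α)))))
    (p : Sym2 (Fin d → ℤ)) :
    P ((Edge p)ᶜ) = ENNReal.ofReal (Real.exp (-(wt α p))) := by
  induction p using Sym2.ind with
  | _ x y =>
    by_cases hxy : x = y
    · subst hxy
      rw [hDiag x, Set.compl_empty, measure_univ]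
      rw [wt_mk]
      have : dist1 x x = 0 := by
        unfold dist1
        simp
      rw [this, Real.zero_rpow (by linarith : -α ≠ 0)]
      simp
    · rw [prob_compl_eq_one_sub (hMeas _), hMarg x y hxy, wt_mk]
      have hw : 0 ≤ dist1 x y ^ (-α) := Real.rpow_nonneg (dist1_nonneg x y) _
      have hexp : Real.exp (-(dist1 x y ^ (-α))) ≤ 1 := by
        rw [Real.exp_le_one_iff]
        linarith
      rw [← ENNReal.ofReal_one, ← ENNReal.ofReal_sub _ (by linarith : 0 ≤ 1 - Real.exp (-(dist1 x y ^ (-α))))]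
      ring_nf

/-- Probability of avoiding finitely many edges. -/
lemma meas_biInter_compl (hα : (0:ℝ) < α) (hMeas : ∀ p, MeasurableSet (Edge p))
    (hDiag : ∀ x, Edge s(x, x) = ∅) (hInd : iIndepSet Edge P)
    (hMarg : ∀ x y : Fin d → ℤ, x ≠ y →
      P (Edge s(x, y)) = ENNReal.ofReal (1 - Real.exp (-(dist1 x y ^ (-α)))))
    (F : Finset (Sym2 (Fin d → ℤ))) :
    P (⋂ p ∈ F, (Edge p)ᶜ) = ENNReal.ofReal (Real.exp (-(∑ p ∈ F, wt α p))) := by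
  have hI : iIndep (fun p => MeasurableSpace.generateFrom {Edge p}) P := hInd
  have := hI.meas_biInter (S := F) (s := fun p => (Edge p)ᶜ)
    (fun p _ => (MeasurableSpace.measurableSet_generateFrom (Set.mem_singleton (Edge p))).compl)
  rw [this]
  calc ∏ p ∈ F, P ((Edge p)ᶜ)
      = ∏ p ∈ F, ENNReal.ofReal (Real.exp (-(wt α p))) :=
        Finset.prod_congr rfl fun p _ => compl_meas P Edge hα hMeas hDiag hMarg p
  _ = ENNReal.ofReal (∏ p ∈ F, Real.exp (-(wt α p))) :=
        (ENNReal.ofReal_prod_of_nonneg fun p _ => (Real.exp_pos _).le).symm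
  _ = _ := by
      rw [← Real.exp_sum]
      congr 1
      rw [← Finset.sum_neg_distrib]

end Prob

/-- rpow bookkeeping identity. -/
lemma Rn_identity {d : ℕ} {α r : ℝ} (hα : (d:ℝ) < α) {n : ℕ} (hn : 1 ≤ n) (hr : 0 < r) :
    (n:ℝ) ^ (d : ℕ) * ((n:ℝ) ^ ((d:ℝ)/(α-(d:ℝ))) * r) ^ ((d : ℝ) - α) = r ^ ((d : ℝ) - α) := by
  have hnpos : (0:ℝ) < (n:ℝ) := by exact_mod_cast hn
  rw [Real.mul_rpow (Real.rpow_nonneg hnpos.le _) hr.le]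
  rw [← Real.rpow_mul hnpos.le, ← mul_assoc, ← Real.rpow_natCast (n:ℝ) d,
    ← Real.rpow_add hnpos]
  have hexp : ((d:ℕ) : ℝ) + (d:ℝ)/(α-(d:ℝ)) * ((d:ℝ) - α) = 0 := by
    have hne : α - (d:ℝ) ≠ 0 := by intro h; rw [sub_eq_zero] at h; exact absurd h.symm (ne_of_lt hα)
    field_simp
    ring
  rw [hexp, Real.rpow_zero, one_mul]


end LRPaux

open LRPaux


/-- **Fréchet-type bounds for undirected discrete long-range percolation on `ℤ^d`.**
For the connection function `g(z) = 1 - exp(-‖z‖₁^(-α))`, `α ∈ (d,∞)`, there exist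
constants `0 < κ₁, κ₁' < ∞` such that with `c_n = n^(d/(α-d))`, for every `r > 0`,
`limsup_n P(e_n^* ≤ c_n r) ≤ exp(-κ₁ r^(d-α))` and
`liminf_n P(e_n^* ≤ c_n r) ≥ exp(-κ₁' r^(d-α))`. -/
theorem discrete_LRP_frechet_bounds
    (d : ℕ) (hd : 1 ≤ d) (α : ℝ) (hα : (d : ℝ) < α)
    (Ω : Type*) [MeasurableSpace Ω] (P : Measure Ω) [IsProbabilityMeasure P]
    (Edge : Sym2 (Fin d → ℤ) → Set Ω)
    (hMeas : ∀ p, MeasurableSet (Edge p))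
    (hDiag : ∀ x, Edge s(x, x) = ∅)
    (hInd : iIndepSet Edge P)
    (hMarg : ∀ x y : Fin d → ℤ, x ≠ y →
      P (Edge s(x, y)) = ENNReal.ofReal (1 - Real.exp (-(dist1 x y ^ (-α))))) :
    ∃ κ₁ κ₁' : ℝ, 0 < κ₁ ∧ 0 < κ₁' ∧
      ∀ r : ℝ, 0 < r →
        limsup (fun n => (P {ω | maxEdge Edge n ω ≤
            ENNReal.ofReal ((n : ℝ) ^ ((d : ℝ) / (α - d)) * r)}).toReal) atTop ≤
          Real.exp (-κ₁ * r ^ ((d : ℝ) - α)) ∧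
        Real.exp (-κ₁' * r ^ ((d : ℝ) - α)) ≤
          liminf (fun n => (P {ω | maxEdge Edge n ω ≤
            ENNReal.ofReal ((n : ℝ) ^ ((d : ℝ) / (α - d)) * r)}).toReal) atTop := by
  classical
  have hαpos : (0:ℝ) < α := lt_of_le_of_lt (Nat.cast_nonneg d) hα
  have hbase : (0:ℝ) < 2 * ((d:ℝ) + 1) := by positivity
  have hgeo : (0:ℝ) < 1 - (2:ℝ) ^ ((d:ℝ) - α) := by
    have : (2:ℝ) ^ ((d:ℝ) - α) < 1 :=
      Real.rpow_lt_one_of_one_lt_of_neg (by norm_num) (by linarith)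
    linarith
  refine ⟨(2 * ((d:ℝ) + 1)) ^ (-α), 3 ^ d * ((5:ℝ) ^ d * (1 - (2:ℝ) ^ ((d:ℝ) - α))⁻¹),
    Real.rpow_pos_of_pos hbase _,
    mul_pos (by positivity) (mul_pos (by positivity) (inv_pos.mpr hgeo)), ?_⟩
  intro r hr
  set κ₁ := (2 * ((d:ℝ) + 1)) ^ (-α) with hκ₁
  set κ₁' := (3:ℝ) ^ d * ((5:ℝ) ^ d * (1 - (2:ℝ) ^ ((d:ℝ) - α))⁻¹) with hκ₁'
  set c : ℝ := (d:ℝ) / (α - d) with hc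
  have hcpos : 0 < c := div_pos (by exact_mod_cast lt_of_lt_of_le Nat.zero_lt_one hd)
    (by linarith)
  set Rn : ℕ → ℝ := fun n => (n:ℝ) ^ c * r with hRn
  -- eventually 1 ≤ n and 1 ≤ Rn n
  have hev : ∀ᶠ n in atTop, 1 ≤ n ∧ 1 ≤ Rn n := by
    have h1 : Tendsto Rn atTop atTop :=
      Filter.Tendsto.atTop_mul_const hr ((tendsto_rpow_atTop hcpos).comp tendsto_natCast_atTop_atTop)
    filter_upwards [h1.eventually_ge_atTop 1, eventually_ge_atTop 1] with n h2 h3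
    exact ⟨h3, h2⟩
  -- per-n probability identity objects
  set T : ℕ → Set (Sym2 (Fin d → ℤ)) := fun n =>
    {p | ∃ x ∈ window d n, ∃ y, p = s(x, y) ∧ Rn n < dist1 x y} with hT
  have hRnpos : ∀ n : ℕ, 1 ≤ Rn n → 0 < Rn n := fun n h => lt_of_lt_of_le one_pos h
  constructor
  · -- limsup bound
    apply Filter.limsup_le_of_le (isCoboundedUnder_le_of_le atTop
      (fun n => ENNReal.toReal_nonneg))
    filter_upwards [hev] with n hn
    obtain ⟨hn1, hRn1⟩ := hn
    obtain ⟨F, hF, hFsum⟩ := exists_good_finset hd hα hn1 hRn1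
    have hsub : {ω | maxEdge Edge n ω ≤ ENNReal.ofReal (Rn n)} ⊆ ⋂ p ∈ F, (Edge p)ᶜ := by
      rw [event_eq Edge (hRnpos n hRn1)]
      intro ω hω
      simp only [Set.mem_iInter] at hω ⊢
      intro p hp
      exact hω p (hF p hp)
    have hle := measure_mono (μ := P) hsub
    rw [meas_biInter_compl P Edge hαpos hMeas hDiag hInd hMarg F] at hle
    have htoReal : (P {ω | maxEdge Edge n ω ≤ ENNReal.ofReal (Rn n)}).toReal ≤
        Real.exp (-(∑ p ∈ F, wt α p)) := by
      have := ENNReal.toReal_mono ENNReal.ofReal_ne_top hle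
      rwa [ENNReal.toReal_ofReal (Real.exp_pos _).le] at this
    refine le_trans htoReal ?_
    rw [Real.exp_le_exp, neg_mul]
    apply neg_le_neg
    refine le_trans ?_ hFsum
    -- κ₁ * r^(d-α) ≤ n^d * Rn^d * (2(d+1) Rn)^(-α)
    have hRnp : 0 < Rn n := hRnpos n hRn1
    have hexpand : (2 * ((d:ℝ) + 1) * Rn n) ^ (-α) = κ₁ * (Rn n) ^ (-α) := by
      rw [Real.mul_rpow hbase.le hRnp.le]
    have hmerge : (Rn n) ^ (d:ℝ) * (Rn n) ^ (-α) = (Rn n) ^ ((d:ℝ) - α) := by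
      rw [← Real.rpow_add hRnp, sub_eq_add_neg]
    have hident := Rn_identity hα hn1 hr
    calc κ₁ * r ^ ((d:ℝ) - α)
        = κ₁ * ((n:ℝ) ^ (d:ℕ) * (Rn n) ^ ((d:ℝ) - α)) := by
          rw [hRn]
          rw [hident]
    _ = (n : ℝ) ^ (d : ℕ) * (Rn n) ^ (d : ℝ) * ((2 * ((d : ℝ) + 1) * Rn n) ^ (-α)) := by
        rw [hexpand, ← hmerge]; ring
    _ ≤ _ := le_refl _
  · -- liminf bound
    apply Filter.le_liminf_of_le (isCoboundedUnder_ge_of_le atTop (x := 1)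
      (fun n => by
        have h1 : P {ω | maxEdge Edge n ω ≤ ENNReal.ofReal ((n : ℝ) ^ ((d : ℝ) / (α - d)) * r)} ≤ 1 :=
          prob_le_one
        have := ENNReal.toReal_mono ENNReal.one_ne_top h1
        simpa using this))
    filter_upwards [hev] with n hn
    obtain ⟨hn1, hRn1⟩ := hn
    have hRnp : 0 < Rn n := hRnpos n hRn1
    have hident : (n:ℝ) ^ (d:ℕ) * (Rn n) ^ ((d:ℝ) - α) = r ^ ((d:ℝ) - α) := by
      simp only [hRn]
      exact Rn_identity hα hn1 hr
    -- the constant bound on all finite subsums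
    set B : ℝ := κ₁' * r ^ ((d:ℝ) - α) with hB
    have hBbound : ∀ F : Finset (Sym2 (Fin d → ℤ)),
        (∀ p ∈ F, p ∈ T n) → ∑ p ∈ F, wt α p ≤ B := by
      intro F hFT
      have h1 := finite_sum_wt_le hα hRn1 F (fun p hp => hFT p hp)
      refine le_trans h1 ?_
      have hcard : ((window d n).card : ℝ) ≤ 3 ^ d * (n:ℝ) ^ (d:ℕ) := by
        have hwc : (window d n).card = (2 * n + 1) ^ d := by
          rw [window, Pi.card_Icc, Finset.prod_const, Finset.card_univ, Fintype.card_fin]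
          congr 1
          rw [Int.card_Icc]
          omega
        rw [hwc]
        push_cast
        rw [← mul_pow]
        apply pow_le_pow_left₀ (by positivity)
        have : (1:ℝ) ≤ (n:ℝ) := by exact_mod_cast hn1
        linarith
      have hC5 : (0:ℝ) ≤ (5:ℝ) ^ d * (1 - (2:ℝ) ^ ((d:ℝ) - α))⁻¹ * (Rn n) ^ ((d:ℝ) - α) :=
        mul_nonneg (mul_nonneg (by positivity) (inv_nonneg.mpr hgeo.le))
          (Real.rpow_nonneg hRnp.le _)
      calc ((window d n).card : ℝ) *
            ((5:ℝ) ^ d * (1 - (2:ℝ) ^ ((d:ℝ) - α))⁻¹ * (Rn n) ^ ((d:ℝ) - α))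
          ≤ (3 ^ d * (n:ℝ) ^ (d:ℕ)) *
            ((5:ℝ) ^ d * (1 - (2:ℝ) ^ ((d:ℝ) - α))⁻¹ * (Rn n) ^ ((d:ℝ) - α)) :=
            mul_le_mul_of_nonneg_right hcard hC5
      _ = κ₁' * ((n:ℝ) ^ (d:ℕ) * (Rn n) ^ ((d:ℝ) - α)) := by rw [hκ₁']; ring
      _ = B := by rw [hident, hB]
    -- enumeration of pairs
    obtain ⟨e, he⟩ := exists_surjective_nat (Sym2 (Fin d → ℤ))
    set Fk : ℕ → Finset (Sym2 (Fin d → ℤ)) :=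
      fun k => ((Finset.range k).image e).filter (fun p => p ∈ T n) with hFk
    set D : ℕ → Set Ω := fun k => ⋂ p ∈ Fk k, (Edge p)ᶜ with hD
    have hDmeas : ∀ k, NullMeasurableSet (D k) P :=
      fun k => (MeasurableSet.biInter (Finset.countable_toSet _)
        (fun p _ => (hMeas p).compl)).nullMeasurableSet
    have hFkmono : ∀ {k k' : ℕ}, k ≤ k' → Fk k ⊆ Fk k' := by
      intro k k' hkk'
      simp only [hFk]
      intro p hp
      rw [Finset.mem_filter] at hp ⊢
      refine ⟨?_, hp.2⟩
      obtain ⟨m, hm, rfl⟩ := Finset.mem_image.mp hp.1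
      exact Finset.mem_image_of_mem e (Finset.mem_range.mpr
        (lt_of_lt_of_le (Finset.mem_range.mp hm) hkk'))
    have hanti : Antitone D := by
      intro k k' hkk'
      intro ω hω
      simp only [hD, Set.mem_iInter] at hω ⊢
      intro p hp
      exact hω p (hFkmono hkk' hp)
    have hInter : ⋂ k, D k = {ω | maxEdge Edge n ω ≤ ENNReal.ofReal (Rn n)} := by
      rw [event_eq Edge hRnp]
      ext ω
      simp only [hD, Set.mem_iInter]
      constructor
      · intro h p hpT
        obtain ⟨k, rfl⟩ := he p
        exact h (k + 1) _ (Finset.mem_filter.mpr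
          ⟨Finset.mem_image_of_mem e (Finset.mem_range.mpr (Nat.lt_succ_self k)), hpT⟩)
      · intro h k p hp
        exact h p (Finset.mem_filter.mp hp).2
    have htend : Tendsto (P ∘ D) atTop (nhds (P (⋂ k, D k))) :=
      tendsto_measure_iInter_atTop hDmeas hanti ⟨0, measure_ne_top P _⟩
    have hlb : ∀ k, ENNReal.ofReal (Real.exp (-B)) ≤ (P ∘ D) k := by
      intro k
      have : P (D k) = ENNReal.ofReal (Real.exp (-(∑ p ∈ Fk k, wt α p))) := by
        rw [hD]
        exact meas_biInter_compl P Edge hαpos hMeas hDiag hInd hMarg (Fk k)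
      simp only [Function.comp_apply, this]
      apply ENNReal.ofReal_le_ofReal
      rw [Real.exp_le_exp]
      exact neg_le_neg (hBbound (Fk k) (fun p hp => (Finset.mem_filter.mp hp).2))
    have hliminf : ENNReal.ofReal (Real.exp (-B)) ≤ P (⋂ k, D k) :=
      ge_of_tendsto htend (Filter.Eventually.of_forall hlb)
    rw [hInter] at hliminf
    have := ENNReal.toReal_mono (measure_ne_top P _) hliminf
    rw [ENNReal.toReal_ofReal (Real.exp_pos _).le] at this
    calc Real.exp (-κ₁' * r ^ ((d:ℝ) - α)) = Real.exp (-B) := by rw [hB, neg_mul]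
    _ ≤ _ := this


end
end

section
/- Let d ≥ 1 and M, α ∈ (0, ∞), and consider discrete long-range percolation on ℤ^d with connection function g(z) = M^{−α}(M − ‖z‖₁)^α·1{‖z‖₁ ≤ M}. For any constant K > 0 set c_n = K·n^{−d/(α+1)}. Then almost surely c_n^{−1}(e_n* − M) → −∞ as n → ∞ (in contrast to the continuous model, where this normalization yields a Weibull limit). -/
open MeasureTheory ProbabilityTheory Filter
open scoped ENNReal

noncomputable section

open LRP

/-- **Failure of the Weibull limit for discrete long-range percolation on `ℤ^d`.**
For the connection function `g(z) = M^(-α)(M - ‖z‖₁)^α 1{‖z‖₁ ≤ M}`, for any constant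
`K > 0`, setting `c_n = K n^(-d/(α+1))`, almost surely `c_n⁻¹(e_n^* - M) → -∞` as
`n → ∞` (here `e_n^*` is set to `0` if no edge meets the window). -/
theorem discrete_LRP_weibull_fails
    (d : ℕ) (hd : 1 ≤ d) (M α : ℝ) (hM : 0 < M) (hα : 0 < α)
    (Ω : Type*) [MeasurableSpace Ω] (P : Measure Ω) [IsProbabilityMeasure P]
    (Edge : Sym2 (Fin d → ℤ) → Set Ω)
    (hMeas : ∀ p, MeasurableSet (Edge p))
    (hDiag : ∀ x, Edge s(x, x) = ∅)
    (hInd : iIndepSet Edge P)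
    (hMarg : ∀ x y : Fin d → ℤ, x ≠ y →
      P (Edge s(x, y)) = ENNReal.ofReal
        (if dist1 x y ≤ M then M ^ (-α) * (M - dist1 x y) ^ α else 0)) :
    ∀ K : ℝ, 0 < K →
      ∀ᵐ ω ∂P, Tendsto
        (fun n : ℕ => ((maxEdge Edge n ω).toReal - M) / (K * (n : ℝ) ^ (-(d : ℝ) / (α + 1))))
        atTop atBot := by
  intro K hK
  -- notation
  have hβpos : 0 < (d : ℝ) / (α + 1) := by
    apply div_pos
    · exact_mod_cast Nat.lt_of_lt_of_le Nat.zero_lt_one hd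
    · linarith
  set m : ℝ := (⌈M⌉ : ℝ) - 1 with hm
  have hmM : m < M := by
    have := Int.ceil_lt_add_one M
    simp only [hm]; linarith
  have hm0 : 0 ≤ m := by
    have h1 : (1 : ℤ) ≤ ⌈M⌉ := by
      rwa [Int.le_ceil_iff, show ((1:ℤ):ℝ) - 1 = 0 by norm_num]
    have : ((1:ℤ) : ℝ) ≤ (⌈M⌉ : ℝ) := by exact_mod_cast h1
    simp only [hm]; push_cast at this ⊢; linarith
  -- dist1 is integer-valued
  have hdistInt : ∀ x y : Fin d → ℤ, ∃ k : ℤ, dist1 x y = (k : ℝ) := by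
    intro x y
    refine ⟨∑ i, |x i - y i|, ?_⟩
    unfold dist1
    push_cast
    rfl
  -- almost surely all edges have length ≤ m
  have hAE : ∀ᵐ ω ∂P, ∀ x y : Fin d → ℤ, ω ∈ Edge s(x, y) → dist1 x y ≤ m := by
    rw [ae_all_iff]
    intro x
    rw [ae_all_iff]
    intro y
    by_cases hle : dist1 x y ≤ m
    · exact ae_of_all _ fun ω _ => hle
    · push_neg at hle
      by_cases hxy : x = y
      · exfalso
        apply absurd hle
        push_neg
        subst hxy
        have : dist1 x x = 0 := by unfold dist1; simp
        rw [this]; exact hm0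
      · have h0 : P (Edge s(x, y)) = 0 := by
          rw [hMarg x y hxy]
          obtain ⟨k, hk⟩ := hdistInt x y
          have hkM : (M : ℝ) ≤ (k : ℝ) := by
            have h1 : (⌈M⌉ : ℝ) - 1 < (k : ℝ) := by rw [← hk]; exact hle
            have h2 : ⌈M⌉ ≤ k := by
              have : ⌈M⌉ - 1 < k := by exact_mod_cast h1
              omega
            calc M ≤ (⌈M⌉ : ℝ) := Int.le_ceil M
            _ ≤ (k : ℝ) := by exact_mod_cast h2
          by_cases hcase : dist1 x y ≤ M
          · have hMk : dist1 x y = M := le_antisymm hcase (hk ▸ hkM)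
            rw [if_pos hcase, hMk, sub_self, Real.zero_rpow (ne_of_gt hα), mul_zero,
              ENNReal.ofReal_zero]
          · rw [if_neg hcase, ENNReal.ofReal_zero]
        have := measure_eq_zero_iff_ae_notMem.mp h0
        filter_upwards [this] with ω hω hmem
        exact absurd hmem hω
  filter_upwards [hAE] with ω hω
  -- the max edge length is bounded by m
  have hbound : ∀ n : ℕ, (maxEdge Edge n ω).toReal ≤ m := by
    intro n
    have hle : maxEdge Edge n ω ≤ ENNReal.ofReal m := by
      unfold maxEdge
      refine iSup₂_le fun x _ => iSup_le fun y => ?_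
      by_cases hω' : ω ∈ Edge s(x, y)
      · rw [Set.indicator_of_mem hω']
        exact ENNReal.ofReal_le_ofReal (hω x y hω')
      · rw [Set.indicator_of_notMem hω']
        exact zero_le
    exact ENNReal.toReal_le_of_le_ofReal hm0 hle
  -- the comparison sequence tends to -∞
  have hnat : Tendsto (fun n : ℕ => ((n : ℝ)) ^ ((d : ℝ) / (α + 1))) atTop atTop :=
    (tendsto_rpow_atTop hβpos).comp tendsto_natCast_atTop_atTop
  have hcneg : (m - M) / K < 0 := div_neg_of_neg_of_pos (by linarith) hK
  have hg : Tendsto (fun n : ℕ => (m - M) / K * (n : ℝ) ^ ((d : ℝ) / (α + 1)))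
      atTop atBot := hnat.const_mul_atTop_of_neg hcneg
  have hEq : ∀ n : ℕ, (m - M) / (K * (n : ℝ) ^ (-(d : ℝ) / (α + 1)))
      = (m - M) / K * (n : ℝ) ^ ((d : ℝ) / (α + 1)) := by
    intro n
    rcases Nat.eq_zero_or_pos n with hn | hn
    · subst hn
      simp only [Nat.cast_zero]
      rw [Real.zero_rpow (by rw [neg_div]; exact neg_ne_zero.mpr (ne_of_gt hβpos)), Real.zero_rpow (ne_of_gt hβpos), mul_zero,
        mul_zero, div_zero]
    · have hnpos : (0 : ℝ) < (n : ℝ) := by exact_mod_cast hn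
      have hrp : (0 : ℝ) < (n : ℝ) ^ ((d : ℝ) / (α + 1)) := Real.rpow_pos_of_pos hnpos _
      rw [show -(d : ℝ) / (α + 1) = -((d : ℝ) / (α + 1)) by ring,
        Real.rpow_neg hnpos.le]
      field_simp
  refine tendsto_atBot_mono' atTop ?_ ((hg.congr fun n => (hEq n).symm))
  filter_upwards [eventually_ge_atTop 1] with n hn
  have hnpos : (0 : ℝ) < (n : ℝ) := by exact_mod_cast hn
  have hcn : 0 < K * (n : ℝ) ^ (-(d : ℝ) / (α + 1)) :=
    mul_pos hK (Real.rpow_pos_of_pos hnpos _)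
  exact (div_le_div_iff_of_pos_right hcn).mpr (by linarith [hbound n])


end
end

section
/- Let d ≥ 1, α ∈ (d, ∞) and r > 0, and set c_n = n^{d/(α−d)}. Then lim_{n→∞} n^d · Σ_{k = ⌊c_n r⌋ + 1}^{∞} k^{d−α−1} = r^{d−α} / (α − d). -/
open Filter

section aux

open MeasureTheory in
/-- Integral comparison: for `0 < a ≤ b`,
`s (b-a) b^(-s-1) ≤ a^(-s) - b^(-s) ≤ s (b-a) a^(-s-1)`. -/
lemma rpow_sub_bounds {s : ℝ} (hs : 0 < s) {a b : ℝ} (ha : 0 < a) (hab : a ≤ b) :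
    s * ((b - a) * b ^ (-s - 1)) ≤ a ^ (-s) - b ^ (-s) ∧
      a ^ (-s) - b ^ (-s) ≤ s * ((b - a) * a ^ (-s - 1)) := by
  have hb : 0 < b := ha.trans_le hab
  have h0 : (0 : ℝ) ∉ Set.uIcc a b := by
    rw [Set.uIcc_of_le hab]
    intro h
    exact absurd (Set.mem_Icc.1 h).1 (not_le.2 ha)
  have hne : -s - 1 ≠ -1 := by intro h; linarith
  have hint : ∫ x in a..b, x ^ (-s - 1) = (a ^ (-s) - b ^ (-s)) / s := by
    rw [integral_rpow (Or.inr ⟨hne, h0⟩)]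
    have h1 : -s - 1 + 1 = -s := by ring
    rw [h1, div_neg, ← neg_div, neg_sub]
  have hi : IntervalIntegrable (fun x : ℝ => x ^ (-s - 1)) volume a b :=
    intervalIntegral.intervalIntegrable_rpow (Or.inr h0)
  have hlow : (b - a) * b ^ (-s - 1) ≤ ∫ x in a..b, x ^ (-s - 1) := by
    have := intervalIntegral.integral_mono_on hab intervalIntegrable_const hi
      (fun x hx => Real.rpow_le_rpow_of_nonpos (ha.trans_le hx.1) hx.2 (by linarith))
    simpa [intervalIntegral.integral_const, smul_eq_mul] using this
  have hhigh : (∫ x in a..b, x ^ (-s - 1)) ≤ (b - a) * a ^ (-s - 1) := by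
    have := intervalIntegral.integral_mono_on hab hi intervalIntegrable_const
      (fun x hx => Real.rpow_le_rpow_of_nonpos ha hx.1 (by linarith))
    simpa [intervalIntegral.integral_const, smul_eq_mul] using this
  have he : a ^ (-s) - b ^ (-s) = s * ∫ x in a..b, x ^ (-s - 1) := by
    rw [hint, mul_div_cancel₀ _ hs.ne']
  constructor
  · rw [he]; exact mul_le_mul_of_nonneg_left hlow hs.le
  · rw [he]; exact mul_le_mul_of_nonneg_left hhigh hs.le

/-- Telescoping sum: `∑_{k ≥ m} (g k - g (k+1)) = g m` when `g` is eventually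
antitone and tends to `0`. -/
lemma hasSum_telescope (g : ℕ → ℝ) (m : ℕ) (hmono : ∀ k, m ≤ k → g (k + 1) ≤ g k)
    (h0 : Tendsto g atTop (nhds 0)) :
    HasSum (fun k => if m ≤ k then g k - g (k + 1) else 0) (g m) := by
  have hnn : ∀ k, 0 ≤ if m ≤ k then g k - g (k + 1) else 0 := by
    intro k
    split
    · exact sub_nonneg.2 (hmono _ ‹_›)
    · exact le_rfl
  rw [hasSum_iff_tendsto_nat_of_nonneg hnn]
  have key : ∀ n, m ≤ n →
      ∑ k ∈ Finset.range n, (if m ≤ k then g k - g (k + 1) else 0) = g m - g n := by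
    intro n hn
    have hfil : (Finset.range n).filter (fun k => m ≤ k) = Finset.Ico m n := by
      ext k
      simp [Finset.mem_filter, Finset.mem_range, Finset.mem_Ico, and_comm]
    rw [← Finset.sum_filter, hfil, Finset.sum_Ico_eq_sum_range]
    have h := Finset.sum_range_sub' (fun i => g (m + i)) (n - m)
    simp only [add_zero] at h
    calc ∑ i ∈ Finset.range (n - m), (g (m + i) - g (m + i + 1))
        = ∑ i ∈ Finset.range (n - m),
            ((fun i => g (m + i)) i - (fun i => g (m + i)) (i + 1)) := by
          refine Finset.sum_congr rfl fun i _ => ?_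
          simp [add_assoc]
      _ = g m - g (m + (n - m)) := h
      _ = g m - g n := by rw [Nat.add_sub_cancel' hn]
  have hlim : Tendsto (fun n => g m - g n) atTop (nhds (g m)) := by
    have h : Tendsto (fun _ : ℕ => g m) atTop (nhds (g m)) := tendsto_const_nhds
    simpa using h.sub h0
  exact hlim.congr' (eventually_atTop.2 ⟨m, fun n hn => (key n hn).symm⟩)

lemma tail_lower {s : ℝ} (hs : 0 < s) (m : ℕ) (hm : 1 ≤ m) :
    (m : ℝ) ^ (-s) / s ≤ ∑' k : ℕ, if m ≤ k then (k : ℝ) ^ (-s - 1) else 0 := by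
  set g : ℕ → ℝ := fun k => (k : ℝ) ^ (-s) / s with hg
  have hgmono : ∀ k, m ≤ k → g (k + 1) ≤ g k := by
    intro k hk
    have hk1 : (0 : ℝ) < (k : ℝ) := by exact_mod_cast hm.trans hk
    have h : ((k + 1 : ℕ) : ℝ) ^ (-s) ≤ (k : ℝ) ^ (-s) :=
      Real.rpow_le_rpow_of_nonpos hk1 (by push_cast; linarith) (by linarith)
    exact (div_le_div_iff_of_pos_right hs).2 h
  have hg0 : Tendsto g atTop (nhds 0) := by
    have h1 : Tendsto (fun k : ℕ => (k : ℝ) ^ (-s)) atTop (nhds 0) :=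
      (tendsto_rpow_neg_atTop hs).comp tendsto_natCast_atTop_atTop
    simpa [hg] using h1.div_const s
  have ht := hasSum_telescope g m hgmono hg0
  have hf : Summable (fun k : ℕ => (k : ℝ) ^ (-s - 1)) :=
    Real.summable_nat_rpow.2 (by linarith)
  have hS : Summable (fun k : ℕ => if m ≤ k then (k : ℝ) ^ (-s - 1) else 0) := by
    refine Summable.of_nonneg_of_le (fun k => ?_) (fun k => ?_) hf
    · split
      · exact Real.rpow_nonneg (Nat.cast_nonneg k) _
      · exact le_rfl
    · split
      · exact le_rfl
      · exact Real.rpow_nonneg (Nat.cast_nonneg k) _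
  rw [show (m : ℝ) ^ (-s) / s = g m from rfl, ← ht.tsum_eq]
  refine Summable.tsum_le_tsum (fun k => ?_) ht.summable hS
  by_cases hk : m ≤ k
  · simp only [hk, if_true]
    have hk1 : (0 : ℝ) < (k : ℝ) := by exact_mod_cast hm.trans hk
    have hb := (rpow_sub_bounds hs hk1 (by linarith : (k : ℝ) ≤ (k : ℝ) + 1)).2
    have hc : ((k + 1 : ℕ) : ℝ) = (k : ℝ) + 1 := by push_cast; ring
    show (k : ℝ) ^ (-s) / s - ((k + 1 : ℕ) : ℝ) ^ (-s) / s ≤ (k : ℝ) ^ (-s - 1)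
    rw [hc, div_sub_div_same, div_le_iff₀ hs]
    calc (k : ℝ) ^ (-s) - ((k : ℝ) + 1) ^ (-s)
        ≤ s * ((((k : ℝ) + 1) - (k : ℝ)) * (k : ℝ) ^ (-s - 1)) := hb
      _ = (k : ℝ) ^ (-s - 1) * s := by ring
  · simp [hk]

lemma tail_upper {s : ℝ} (hs : 0 < s) (m : ℕ) (hm : 2 ≤ m) :
    (∑' k : ℕ, if m ≤ k then (k : ℝ) ^ (-s - 1) else 0) ≤ ((m : ℝ) - 1) ^ (-s) / s := by
  set G : ℕ → ℝ := fun k => ((k - 1 : ℕ) : ℝ) ^ (-s) / s with hG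
  have cast_sub : ∀ k : ℕ, 1 ≤ k → ((k - 1 : ℕ) : ℝ) = (k : ℝ) - 1 := by
    intro k hk
    push_cast [Nat.cast_sub hk]
    ring
  have hGmono : ∀ k, m ≤ k → G (k + 1) ≤ G k := by
    intro k hk
    have hk2 : 2 ≤ k := hm.trans hk
    have hk1r : (2 : ℝ) ≤ (k : ℝ) := by exact_mod_cast hk2
    show ((k + 1 - 1 : ℕ) : ℝ) ^ (-s) / s ≤ ((k - 1 : ℕ) : ℝ) ^ (-s) / s
    rw [Nat.add_sub_cancel, cast_sub k (by omega)]
    have h : (k : ℝ) ^ (-s) ≤ ((k : ℝ) - 1) ^ (-s) :=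
      Real.rpow_le_rpow_of_nonpos (by linarith) (by linarith) (by linarith)
    exact (div_le_div_iff_of_pos_right hs).2 h
  have hG0 : Tendsto G atTop (nhds 0) := by
    have h1 : Tendsto (fun k : ℕ => (k : ℝ) ^ (-s) / s) atTop (nhds 0) := by
      have h2 : Tendsto (fun k : ℕ => (k : ℝ) ^ (-s)) atTop (nhds 0) :=
        (tendsto_rpow_neg_atTop hs).comp tendsto_natCast_atTop_atTop
      simpa using h2.div_const s
    exact h1.comp (tendsto_sub_atTop_nat 1)
  have ht := hasSum_telescope G m hGmono hG0
  have hS : Summable (fun k : ℕ => if m ≤ k then (k : ℝ) ^ (-s - 1) else 0) := by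
    refine Summable.of_nonneg_of_le (fun k => ?_) (fun k => ?_)
      (Real.summable_nat_rpow.2 (by linarith : -s - 1 < -1))
    · split
      · exact Real.rpow_nonneg (Nat.cast_nonneg k) _
      · exact le_rfl
    · split
      · exact le_rfl
      · exact Real.rpow_nonneg (Nat.cast_nonneg k) _
  have hGm : G m = ((m : ℝ) - 1) ^ (-s) / s := by
    rw [hG]
    simp only
    rw [cast_sub m (by omega)]
  rw [← hGm, ← ht.tsum_eq]
  refine Summable.tsum_le_tsum (fun k => ?_) hS ht.summable
  by_cases hk : m ≤ k
  · simp only [hk, if_true]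
    have hk2 : 2 ≤ k := hm.trans hk
    have hk1r : (2 : ℝ) ≤ (k : ℝ) := by exact_mod_cast hk2
    show (k : ℝ) ^ (-s - 1) ≤ ((k - 1 : ℕ) : ℝ) ^ (-s) / s - ((k + 1 - 1 : ℕ) : ℝ) ^ (-s) / s
    rw [Nat.add_sub_cancel, cast_sub k (by omega), div_sub_div_same, le_div_iff₀ hs]
    have hb := (rpow_sub_bounds hs (show (0 : ℝ) < (k : ℝ) - 1 by linarith)
      (by linarith : (k : ℝ) - 1 ≤ (k : ℝ))).1
    calc (k : ℝ) ^ (-s - 1) * s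
        = s * (((k : ℝ) - ((k : ℝ) - 1)) * (k : ℝ) ^ (-s - 1)) := by ring
      _ ≤ ((k : ℝ) - 1) ^ (-s) - (k : ℝ) ^ (-s) := hb
  · simp [hk]

end aux

/-- **Key deterministic asymptotics in the Fréchet case.**
For `d ≥ 1`, `α ∈ (d,∞)` and `r > 0`, with `c_n = n^(d/(α-d))`,
`n^d ∑_{k = ⌊c_n r⌋ + 1}^∞ k^(d-α-1) → r^(d-α)/(α-d)` as `n → ∞`. -/
theorem tail_sum_asymptotics
    (d : ℕ) (hd : 1 ≤ d) (α : ℝ) (hα : (d : ℝ) < α) (r : ℝ) (hr : 0 < r) :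
    Tendsto
      (fun n : ℕ => (n : ℝ) ^ d *
        ∑' k : ℕ, if ⌊(n : ℝ) ^ ((d : ℝ) / (α - d)) * r⌋₊ + 1 ≤ k
          then (k : ℝ) ^ ((d : ℝ) - α - 1) else 0)
      atTop (nhds (r ^ ((d : ℝ) - α) / (α - d))) := by
  have hs : (0 : ℝ) < α - d := sub_pos.2 hα
  set s : ℝ := α - d with hs_def
  have hexp1 : (d : ℝ) - α - 1 = -s - 1 := by rw [hs_def]; ring
  have hexp2 : (d : ℝ) - α = -s := by rw [hs_def]; ring
  rw [hexp2]
  -- c n := (n : ℝ) ^ ((d : ℝ) / s)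
  set c : ℕ → ℝ := fun n => (n : ℝ) ^ ((d : ℝ) / s) with hc_def
  have hdpos : (0 : ℝ) < (d : ℝ) := by exact_mod_cast hd
  have hc : Tendsto c atTop atTop :=
    (tendsto_rpow_atTop (by positivity)).comp tendsto_natCast_atTop_atTop
  have hcr : Tendsto (fun n => c n * r) atTop atTop := hc.atTop_mul_const hr
  have hcinv : Tendsto (fun n => (c n)⁻¹) atTop (nhds 0) := hc.inv_tendsto_atTop
  -- lower and upper comparison sequences
  have hL : Tendsto (fun n => (r + (c n)⁻¹) ^ (-s) / s) atTop (nhds (r ^ (-s) / s)) := by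
    have h1 : Tendsto (fun n => r + (c n)⁻¹) atTop (nhds r) := by
      simpa using tendsto_const_nhds.add hcinv
    exact (((Real.continuousAt_rpow_const r (-s) (Or.inl hr.ne')).tendsto.comp h1).div_const s)
  have hU : Tendsto (fun n => (r - (c n)⁻¹) ^ (-s) / s) atTop (nhds (r ^ (-s) / s)) := by
    have h1 : Tendsto (fun n => r - (c n)⁻¹) atTop (nhds r) := by
      simpa using tendsto_const_nhds.sub hcinv
    exact (((Real.continuousAt_rpow_const r (-s) (Or.inl hr.ne')).tendsto.comp h1).div_const s)
  refine tendsto_of_tendsto_of_tendsto_of_le_of_le' hL hU ?_ ?_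
  · -- lower bound, eventually
    filter_upwards [hcr.eventually_ge_atTop 2, eventually_ge_atTop 1] with n h2 h1
    have hn1 : (1 : ℝ) ≤ (n : ℝ) := by exact_mod_cast h1
    have hC : 0 < c n := by
      rw [hc_def]
      exact Real.rpow_pos_of_pos (by linarith) _
    have hCr : 0 < c n * r := by positivity
    have hnd : ((n : ℝ)) ^ d = c n ^ s := by
      rw [hc_def, ← Real.rpow_natCast (n : ℝ) d, ← Real.rpow_mul (by linarith),
        div_mul_cancel₀ _ hs.ne']
    set m : ℕ := ⌊c n * r⌋₊ + 1 with hm_def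
    have hmle : (m : ℝ) ≤ c n * r + 1 := by
      have := Nat.floor_le hCr.le
      push_cast [hm_def]
      linarith
    have hmpos : (0 : ℝ) < (m : ℝ) := by
      have : 1 ≤ m := by omega
      exact_mod_cast this
    have hstep1 : (c n * r + 1) ^ (-s) ≤ (m : ℝ) ^ (-s) :=
      Real.rpow_le_rpow_of_nonpos hmpos hmle (by linarith)
    have hstep2 : (m : ℝ) ^ (-s) / s ≤ ∑' k : ℕ, if m ≤ k then (k : ℝ) ^ (-s - 1) else 0 :=
      tail_lower hs m (by omega)
    have heq : (r + (c n)⁻¹) ^ (-s) / s = (n : ℝ) ^ d * ((c n * r + 1) ^ (-s) / s) := by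
      have h3 : r + (c n)⁻¹ = (c n * r + 1) / c n := by
        field_simp
      rw [h3, Real.div_rpow (by positivity) hC.le, Real.rpow_neg hC.le,
        div_inv_eq_mul, hnd]
      ring
    calc (r + (c n)⁻¹) ^ (-s) / s
        = (n : ℝ) ^ d * ((c n * r + 1) ^ (-s) / s) := heq
      _ ≤ (n : ℝ) ^ d * ((m : ℝ) ^ (-s) / s) := by
          apply mul_le_mul_of_nonneg_left _ (by positivity)
          exact (div_le_div_iff_of_pos_right hs).2 hstep1
      _ ≤ (n : ℝ) ^ d * ∑' k : ℕ, if m ≤ k then (k : ℝ) ^ (-s - 1) else 0 :=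
          mul_le_mul_of_nonneg_left hstep2 (by positivity)
  · -- upper bound, eventually
    filter_upwards [hcr.eventually_ge_atTop 2, eventually_ge_atTop 1] with n h2 h1
    have hn1 : (1 : ℝ) ≤ (n : ℝ) := by exact_mod_cast h1
    have hC : 0 < c n := by
      rw [hc_def]
      exact Real.rpow_pos_of_pos (by linarith) _
    have hCr : 0 < c n * r := by positivity
    have hnd : ((n : ℝ)) ^ d = c n ^ s := by
      rw [hc_def, ← Real.rpow_natCast (n : ℝ) d, ← Real.rpow_mul (by linarith),
        div_mul_cancel₀ _ hs.ne']
    set m : ℕ := ⌊c n * r⌋₊ + 1 with hm_def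
    have hfl2 : 2 ≤ ⌊c n * r⌋₊ := Nat.le_floor (by exact_mod_cast h2)
    have hm2 : 2 ≤ m := by omega
    have hmge : c n * r ≤ (m : ℝ) - 1 + 1 := by
      have h4 : c n * r - 1 < (⌊c n * r⌋₊ : ℝ) := Nat.sub_one_lt_floor _
      push_cast [hm_def]
      linarith
    have hmge' : c n * r - 1 ≤ (m : ℝ) - 1 := by
      have h4 : c n * r - 1 < (⌊c n * r⌋₊ : ℝ) := Nat.sub_one_lt_floor _
      push_cast [hm_def]
      linarith
    have hpos1 : (0 : ℝ) < c n * r - 1 := by linarith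
    have hstep1 : ((m : ℝ) - 1) ^ (-s) ≤ (c n * r - 1) ^ (-s) :=
      Real.rpow_le_rpow_of_nonpos hpos1 hmge' (by linarith)
    have hstep2 : (∑' k : ℕ, if m ≤ k then (k : ℝ) ^ (-s - 1) else 0)
        ≤ ((m : ℝ) - 1) ^ (-s) / s := tail_upper hs m hm2
    have heq : (r - (c n)⁻¹) ^ (-s) / s = (n : ℝ) ^ d * ((c n * r - 1) ^ (-s) / s) := by
      have h3 : r - (c n)⁻¹ = (c n * r - 1) / c n := by
        field_simp
      rw [h3, Real.div_rpow (by positivity) hC.le, Real.rpow_neg hC.le,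
        div_inv_eq_mul, hnd]
      ring
    calc (n : ℝ) ^ d * (∑' k : ℕ, if m ≤ k then (k : ℝ) ^ (-s - 1) else 0)
        ≤ (n : ℝ) ^ d * (((m : ℝ) - 1) ^ (-s) / s) :=
          mul_le_mul_of_nonneg_left hstep2 (by positivity)
      _ ≤ (n : ℝ) ^ d * ((c n * r - 1) ^ (-s) / s) := by
          apply mul_le_mul_of_nonneg_left _ (by positivity)
          exact (div_le_div_iff_of_pos_right hs).2 hstep1
      _ = (r - (c n)⁻¹) ^ (-s) / s := heq.symm
end

section
/- Let d ≥ 1, ρ > 0 and α ∈ (d, ∞), and let g : ℝ^d → [0,1] be given by g(z) = 1 − exp(−‖z‖^{−α}), where ‖·‖ is the Euclidean norm on ℝ^d. Set c_n = n^{d/(α−d)} and b_n = 0. Then there exists a constant C > 0, depending only on ρ, d and α, such that for every r > 0, lim_{n→∞} n^d · ρ ∫_{{z ∈ ℝ^d : ‖z‖ > c_n r}} g(z) dz = C·r^{d−α}. -/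
open Filter MeasureTheory Set Real Topology

/-- `b * (1 - exp (-(c * b⁻¹))) → c` as `b → ∞`. -/
lemma aux_lim_exp (c : ℝ) :
    Tendsto (fun b : ℝ => b * (1 - Real.exp (-(c * b⁻¹)))) atTop (𝓝 c) := by
  have h1 : HasDerivAt (fun t : ℝ => c * t) c 0 := by
    simpa using (hasDerivAt_id (0:ℝ)).const_mul c
  have h3 : HasDerivAt (fun t : ℝ => Real.exp (-(c * t))) (-c) 0 := by
    simpa using h1.neg.exp
  have h4 : HasDerivAt (fun t : ℝ => 1 - Real.exp (-(c * t))) c 0 := by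
    simpa using h3.const_sub 1
  rw [hasDerivAt_iff_tendsto_slope] at h4
  have hinv : Tendsto (fun b : ℝ => b⁻¹) atTop (𝓝[≠] (0:ℝ)) :=
    tendsto_inv_atTop_nhdsGT_zero.mono_right (nhdsWithin_mono _ (fun x hx => ne_of_gt hx))
  have h5 := h4.comp hinv
  refine h5.congr' ?_
  filter_upwards [eventually_gt_atTop (0:ℝ)] with b hb
  have hb' : b⁻¹ ≠ 0 := inv_ne_zero hb.ne'
  simp only [Function.comp, slope_def_field]
  rw [mul_zero, neg_zero, Real.exp_zero, sub_self, sub_zero, sub_zero]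
  field_simp

/-- Pointwise limit: for `u > 0`, `a^α (1 - exp(-(a^{-α} u^{-α}))) → u^{-α}` as `a → ∞`. -/
lemma aux_lim_pt {α : ℝ} (hα : 0 < α) {u : ℝ} (hu : 0 < u) :
    Tendsto (fun a : ℝ => a ^ α * (1 - Real.exp (-(a ^ (-α) * u ^ (-α)))))
      atTop (𝓝 (u ^ (-α))) := by
  have hb : Tendsto (fun a : ℝ => a ^ α) atTop atTop := tendsto_rpow_atTop hα
  have h0 := (aux_lim_exp (u ^ (-α))).comp hb
  refine h0.congr' ?_
  filter_upwards [eventually_gt_atTop (0:ℝ)] with a ha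
  simp only [Function.comp]
  rw [Real.rpow_neg ha.le, mul_comm (u ^ (-α))]

/-- The dominated-convergence step. -/
lemma aux_J (d : ℕ) (hd : 1 ≤ d) {α : ℝ} (hα : (d:ℝ) < α) :
    Tendsto (fun a : ℝ => ∫ u in Ioi (1:ℝ),
        (u:ℝ) ^ (d-1) * (a ^ α * (1 - Real.exp (-(a ^ (-α) * u ^ (-α))))))
      atTop (𝓝 ((α - d)⁻¹)) := by
  have hd1 : (1:ℝ) ≤ (d:ℝ) := by exact_mod_cast hd
  have hα0 : 0 < α := lt_of_lt_of_le (by linarith) (le_of_lt hα)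
  have hlt : (d:ℝ) - 1 - α < -1 := by linarith
  have hbd : IntegrableOn (fun u : ℝ => u ^ ((d:ℝ) - 1 - α)) (Ioi 1) volume :=
    integrableOn_Ioi_rpow_of_lt hlt one_pos
  have heq : ∀ u : ℝ, u ∈ Ioi (1:ℝ) →
      (u:ℝ) ^ (d-1) * u ^ (-α) = u ^ ((d:ℝ) - 1 - α) := by
    intro u hu
    have hu0 : 0 < u := lt_trans one_pos hu
    rw [← Real.rpow_natCast u (d-1), ← Real.rpow_add hu0]
    congr 1
    rw [Nat.cast_sub hd]
    push_cast
    ring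
  have hbound : IntegrableOn (fun u : ℝ => (u:ℝ) ^ (d-1) * u ^ (-α)) (Ioi 1) volume :=
    hbd.congr_fun (fun u hu => (heq u hu).symm) measurableSet_Ioi
  have key : Tendsto (fun a : ℝ => ∫ u in Ioi (1:ℝ),
      (u:ℝ) ^ (d-1) * (a ^ α * (1 - Real.exp (-(a ^ (-α) * u ^ (-α))))))
      atTop (𝓝 (∫ u in Ioi (1:ℝ), (u:ℝ) ^ (d-1) * u ^ (-α))) := by
    refine tendsto_integral_filter_of_dominated_convergence
      (fun u => (u:ℝ) ^ (d-1) * u ^ (-α)) ?_ ?_ hbound ?_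
    · refine Eventually.of_forall (fun a => ?_)
      exact (by fun_prop : Measurable fun u : ℝ =>
        (u:ℝ) ^ (d-1) * (a ^ α * (1 - Real.exp (-(a ^ (-α) * u ^ (-α)))))).aestronglyMeasurable
    · filter_upwards [eventually_gt_atTop (0:ℝ)] with a ha
      rw [ae_restrict_iff' measurableSet_Ioi]
      refine Eventually.of_forall (fun u hu => ?_)
      have hu0 : 0 < u := lt_trans one_pos hu
      have hx : 0 ≤ a ^ (-α) * u ^ (-α) :=
        mul_nonneg (Real.rpow_nonneg ha.le _) (Real.rpow_nonneg hu0.le _)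
      have h1 : 0 ≤ 1 - Real.exp (-(a ^ (-α) * u ^ (-α))) := by
        have := Real.exp_le_one_iff.mpr (neg_nonpos.mpr hx)
        linarith
      have h2 : 1 - Real.exp (-(a ^ (-α) * u ^ (-α))) ≤ a ^ (-α) * u ^ (-α) := by
        have := Real.add_one_le_exp (-(a ^ (-α) * u ^ (-α)))
        linarith
      have hkey : a ^ α * (a ^ (-α) * u ^ (-α)) = u ^ (-α) := by
        rw [Real.rpow_neg ha.le α, ← mul_assoc, mul_inv_cancel₀ (Real.rpow_pos_of_pos ha α).ne',
          one_mul]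
      rw [Real.norm_eq_abs, abs_of_nonneg]
      · have : a ^ α * (1 - Real.exp (-(a ^ (-α) * u ^ (-α)))) ≤ u ^ (-α) := by
          calc a ^ α * (1 - Real.exp (-(a ^ (-α) * u ^ (-α))))
              ≤ a ^ α * (a ^ (-α) * u ^ (-α)) := by
                exact mul_le_mul_of_nonneg_left h2 (Real.rpow_pos_of_pos ha α).le
            _ = u ^ (-α) := hkey
        exact mul_le_mul_of_nonneg_left this (pow_nonneg hu0.le _)
      · exact mul_nonneg (pow_nonneg hu0.le _)
          (mul_nonneg (Real.rpow_pos_of_pos ha α).le h1)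
    · rw [ae_restrict_iff' measurableSet_Ioi]
      refine Eventually.of_forall (fun u hu => ?_)
      exact (aux_lim_pt hα0 (lt_trans one_pos hu)).const_mul _
  have hval : (∫ u in Ioi (1:ℝ), (u:ℝ) ^ (d-1) * u ^ (-α)) = (α - d)⁻¹ := by
    rw [setIntegral_congr_fun measurableSet_Ioi heq, integral_Ioi_rpow_of_lt hlt one_pos]
    rw [Real.one_rpow]
    have : (d:ℝ) - 1 - α + 1 = -(α - d) := by ring
    rw [this, neg_div_neg_eq, one_div]
  rwa [hval] at key

/-- Radial reduction of the tail integral. -/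
lemma aux_radial (d : ℕ) (hd : 1 ≤ d) (α : ℝ) {R : ℝ} (hR : 0 ≤ R) :
    (∫ z in {z : EuclideanSpace ℝ (Fin d) | R < ‖z‖}, (1 - Real.exp (-(‖z‖ ^ (-α))))) =
      ((d : ℝ) * (volume (Metric.ball (0 : EuclideanSpace ℝ (Fin d)) 1)).toReal) *
        ∫ y in Ioi R, y ^ (d-1) * (1 - Real.exp (-(y ^ (-α)))) := by
  haveI : Nonempty (Fin d) := Fin.pos_iff_nonempty.mp hd
  haveI : Nontrivial (EuclideanSpace ℝ (Fin d)) := inferInstance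
  set f : ℝ → ℝ := (Ioi R).indicator (fun y => 1 - Real.exp (-(y ^ (-α)))) with hf
  have hmeas : MeasurableSet {z : EuclideanSpace ℝ (Fin d) | R < ‖z‖} :=
    measurableSet_lt measurable_const measurable_norm
  have h1 : (∫ z in {z : EuclideanSpace ℝ (Fin d) | R < ‖z‖},
      (1 - Real.exp (-(‖z‖ ^ (-α))))) = ∫ z : EuclideanSpace ℝ (Fin d), f ‖z‖ := by
    rw [← integral_indicator hmeas]
    refine integral_congr_ae (Eventually.of_forall fun z => ?_)
    by_cases h : R < ‖z‖ <;> simp [hf, Set.indicator, h]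
  rw [h1, integral_fun_norm_addHaar volume f, finrank_euclideanSpace_fin]
  have h2 : ∀ y : ℝ, y ^ (d-1) • f y =
      (Ioi R).indicator (fun y : ℝ => y ^ (d-1) * (1 - Real.exp (-(y ^ (-α))))) y := by
    intro y
    by_cases h : y ∈ Ioi R <;> simp [hf, Set.indicator, h]
  simp only [h2]
  rw [setIntegral_indicator measurableSet_Ioi, Ioi_inter_Ioi, max_eq_right hR,
    nsmul_eq_mul, smul_eq_mul, ← mul_assoc]
  rfl

/-- **Appendix Lemma, Fréchet case (F).**
For `g(z) = 1 - exp(-‖z‖^(-α))` on `ℝ^d` (Euclidean norm), `α ∈ (d,∞)`, `ρ > 0`, with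
`c_n = n^(d/(α-d))` and `b_n = 0`, there is a constant `C > 0` depending only on `ρ`, `d`
and `α` such that for every `r > 0`,
`n^d · ρ ∫_{‖z‖ > c_n r} g(z) dz → C r^(d-α)` as `n → ∞`. -/
theorem tail_integral_frechet
    (d : ℕ) (hd : 1 ≤ d) (ρ : ℝ) (hρ : 0 < ρ) (α : ℝ) (hα : (d : ℝ) < α) :
    ∃ C : ℝ, 0 < C ∧
      ∀ r : ℝ, 0 < r →
        Tendsto
          (fun n : ℕ => (n : ℝ) ^ d *
            (ρ * ∫ z in {z : EuclideanSpace ℝ (Fin d) | (n : ℝ) ^ ((d : ℝ) / (α - d)) * r + 0 < ‖z‖},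
              (1 - Real.exp (-(‖z‖ ^ (-α))))))
          atTop (nhds (C * r ^ ((d : ℝ) - α))) := by
  haveI : Nonempty (Fin d) := Fin.pos_iff_nonempty.mp hd
  set κ := (volume (Metric.ball (0 : EuclideanSpace ℝ (Fin d)) 1)).toReal with hκdef
  have hκ : 0 < κ := ENNReal.toReal_pos
    (Metric.measure_ball_pos volume 0 one_pos).ne' measure_ball_lt_top.ne
  have hαd : 0 < α - d := sub_pos.mpr hα
  have hd0 : (0:ℝ) < d := by exact_mod_cast hd
  refine ⟨ρ * (((d:ℝ) * κ) * (α - d)⁻¹), by positivity, ?_⟩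
  intro r hr
  have hp : 0 < (d:ℝ) / (α - d) := div_pos hd0 hαd
  set a : ℕ → ℝ := fun n => (n:ℝ) ^ ((d:ℝ)/(α-d)) * r with hadef
  have ha : Tendsto a atTop atTop :=
    Tendsto.atTop_mul_const hr ((tendsto_rpow_atTop hp).comp tendsto_natCast_atTop_atTop)
  have hJ := (aux_J d hd hα).comp ha
  set K := ρ * (((d:ℝ) * κ) * r ^ ((d:ℝ) - α)) with hKdef
  have hlim := hJ.const_mul K
  have heqlim : K * (α - d)⁻¹ = (ρ * (((d:ℝ) * κ) * (α - d)⁻¹)) * r ^ ((d:ℝ) - α) := by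
    rw [hKdef]; ring
  rw [heqlim] at hlim
  refine hlim.congr' ?_
  filter_upwards [eventually_ge_atTop 1] with n hn
  have hn0 : (0:ℝ) < n := by exact_mod_cast hn
  have hc : 0 < (n:ℝ) ^ ((d:ℝ)/(α-d)) := Real.rpow_pos_of_pos hn0 _
  have han : 0 < a n := mul_pos hc hr
  have hset : {z : EuclideanSpace ℝ (Fin d) | (n:ℝ) ^ ((d:ℝ)/(α-d)) * r + 0 < ‖z‖}
      = {z : EuclideanSpace ℝ (Fin d) | a n < ‖z‖} := by
    simp [hadef]
  have hscale : (∫ y in Ioi (a n), y ^ (d-1) * (1 - Real.exp (-(y ^ (-α)))))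
      = (a n) * ∫ u in Ioi (1:ℝ),
          ((a n * u) ^ (d-1) * (1 - Real.exp (-((a n * u) ^ (-α))))) := by
    have h := integral_comp_mul_left_Ioi
      (fun y : ℝ => y ^ (d-1) * (1 - Real.exp (-(y ^ (-α))))) 1 han
    rw [mul_one] at h
    rw [h, smul_eq_mul, ← mul_assoc, mul_inv_cancel₀ han.ne', one_mul]
  have hinner : ∀ u ∈ Ioi (1:ℝ),
      (a n * u) ^ (d-1) * (1 - Real.exp (-((a n * u) ^ (-α))))
        = (a n) ^ ((d:ℝ)-1-α) *
            (u ^ (d-1) * ((a n) ^ α * (1 - Real.exp (-((a n) ^ (-α) * u ^ (-α)))))) := by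
    intro u hu
    have hu0 : 0 < u := lt_trans one_pos hu
    have hthis : (a n) ^ ((d:ℝ)-1-α) * (a n) ^ α = (a n) ^ (d-1:ℕ) := by
      rw [← Real.rpow_natCast (a n) (d-1), ← Real.rpow_add han]
      congr 1
      rw [Nat.cast_sub hd]
      push_cast
      ring
    rw [Real.mul_rpow han.le hu0.le, mul_pow, ← hthis]
    ring
  have hpow : (n:ℝ) ^ d * ((a n) * (a n) ^ ((d:ℝ)-1-α)) = r ^ ((d:ℝ)-α) := by
    have h1 : (a n) * (a n) ^ ((d:ℝ)-1-α) = (a n) ^ ((d:ℝ)-α) := by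
      nth_rewrite 1 [← Real.rpow_one (a n)]
      rw [← Real.rpow_add han]
      congr 1
      ring
    rw [h1, hadef]
    simp only
    rw [Real.mul_rpow hc.le hr.le, ← Real.rpow_natCast (n:ℝ) d, ← Real.rpow_mul hn0.le,
      ← mul_assoc, ← Real.rpow_add hn0,
      show (d:ℝ) + (d:ℝ)/(α-(d:ℝ)) * ((d:ℝ)-α) = 0 from by field_simp; ring,
      Real.rpow_zero, one_mul]
  -- assemble
  show K * (∫ u in Ioi (1:ℝ),
      u ^ (d-1) * ((a n) ^ α * (1 - Real.exp (-((a n) ^ (-α) * u ^ (-α))))))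
    = (n:ℝ) ^ d * (ρ * ∫ z in {z : EuclideanSpace ℝ (Fin d) |
        (n:ℝ) ^ ((d:ℝ)/(α-d)) * r + 0 < ‖z‖}, (1 - Real.exp (-(‖z‖ ^ (-α)))))
  rw [hset, aux_radial d hd α han.le, hscale,
    setIntegral_congr_fun measurableSet_Ioi hinner, integral_const_mul, hKdef, ← hpow]
  ring
end

section
/- Let d ≥ 1, ρ > 0 and λ ∈ (0, ∞), and let g : ℝ^d → [0,1] be given by g(z) = 1 − exp(−e^{−λ‖z‖}), where ‖·‖ is the Euclidean norm on ℝ^d. Then there exist sequences (c_n), (b_n) of real numbers and a constant C > 0, depending only on ρ, d and λ, such that for every r ∈ ℝ, lim_{n→∞} n^d · ρ ∫_{{z ∈ ℝ^d : ‖z‖ > c_n r + b_n}} g(z) dz = C·e^{−r}. -/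
open Filter MeasureTheory Set

section AuxGumbel

noncomputable def gG (lam u : ℝ) : ℝ := 1 - Real.exp (-Real.exp (-lam * u))
noncomputable def phiG (lam : ℝ) (d : ℕ) (u : ℝ) : ℝ := u ^ (d - 1) * gG lam u
noncomputable def AG (lam : ℝ) (d : ℕ) (t : ℝ) : ℝ := ∫ u in Set.Ioi t, phiG lam d u

variable {lam : ℝ} {d : ℕ}

lemma gG_pos (u : ℝ) : 0 < gG lam u := by
  have : Real.exp (-Real.exp (-lam * u)) < 1 :=
    Real.exp_lt_one_iff.mpr (neg_neg_iff_pos.mpr (Real.exp_pos _))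
  simpa [gG] using this

lemma gG_le_exp (u : ℝ) : gG lam u ≤ Real.exp (-lam * u) := by
  have h := Real.add_one_le_exp (-Real.exp (-lam * u))
  simp only [gG]
  linarith

lemma continuous_phiG : Continuous (phiG lam d) := by
  unfold phiG gG; fun_prop

lemma phiG_pos {u : ℝ} (hu : 0 < u) : 0 < phiG lam d u :=
  mul_pos (pow_pos hu _) (gG_pos u)

lemma phiG_nonneg {u : ℝ} (hu : 0 ≤ u) : 0 ≤ phiG lam d u :=
  mul_nonneg (pow_nonneg hu _) (gG_pos u).le

lemma integrableOn_phiG (hlam : 0 < lam) (hd : 1 ≤ d) {t : ℝ} (ht : 0 ≤ t) : IntegrableOn (phiG lam d) (Ioi t) := by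
  have base : IntegrableOn (phiG lam d) (Ioi (0:ℝ)) := by
    have hmaj : IntegrableOn (fun x : ℝ => x ^ ((d:ℝ) - 1) * Real.exp (-lam * x ^ (1:ℝ)))
        (Ioi (0:ℝ)) :=
      integrableOn_rpow_mul_exp_neg_mul_rpow (by have : (1:ℝ) ≤ d := Nat.one_le_cast.mpr hd; linarith) one_pos hlam
    refine Integrable.mono' hmaj ((continuous_phiG (lam := lam) (d := d)).aestronglyMeasurable.restrict) ?_
    filter_upwards [ae_restrict_mem measurableSet_Ioi] with x hx
    have hx0 : (0:ℝ) < x := hx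
    rw [Real.norm_of_nonneg (phiG_nonneg hx0.le)]
    have h1 : x ^ (d - 1) = x ^ ((d:ℝ) - 1) := by
      rw [← Real.rpow_natCast x (d-1)]
      rw [Nat.cast_sub hd, Nat.cast_one]
    rw [Real.rpow_one]
    calc phiG lam d x ≤ x ^ (d-1) * Real.exp (-lam * x) :=
          mul_le_mul_of_nonneg_left (gG_le_exp x) (pow_nonneg hx0.le _)
      _ = x ^ ((d:ℝ)-1) * Real.exp (-lam * x) := by rw [h1]
  exact base.mono_set (Ioi_subset_Ioi ht)

lemma AG_split (hlam : 0 < lam) (hd : 1 ≤ d) {s t : ℝ} (hs : 0 ≤ s) (hst : s ≤ t) :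
    AG lam d s = (∫ u in Set.Ioc s t, phiG lam d u) + AG lam d t := by
  rw [AG, ← Set.Ioc_union_Ioi_eq_Ioi hst,
    setIntegral_union Set.Ioc_disjoint_Ioi_same measurableSet_Ioi
      (((integrableOn_phiG hlam hd hs)).mono_set Set.Ioc_subset_Ioi_self)
      (integrableOn_phiG hlam hd (hs.trans hst))]
  rfl

lemma AG_nonneg (ht : 0 ≤ t) : 0 ≤ AG lam d t :=
  setIntegral_nonneg measurableSet_Ioi fun u hu => phiG_nonneg (ht.trans (le_of_lt hu))

lemma AG_pos (hlam : 0 < lam) (hd : 1 ≤ d) {t : ℝ} (ht : 0 ≤ t) : 0 < AG lam d t := by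
  have hsplit := AG_split hlam hd ht (le_of_lt (lt_add_one t))
  have h1 : 0 < ∫ u in Set.Ioc t (t+1), phiG lam d u := by
    rw [← intervalIntegral.integral_of_le (le_of_lt (lt_add_one t))]
    refine intervalIntegral.intervalIntegral_pos_of_pos_on
      ((continuous_phiG (lam := lam) (d := d)).intervalIntegrable _ _) (fun x hx => ?_) (lt_add_one t)
    exact phiG_pos (lt_of_le_of_lt ht hx.1)
  have h2 : 0 ≤ AG lam d (t+1) := AG_nonneg (by linarith)
  linarith

lemma AG_anti (hlam : 0 < lam) (hd : 1 ≤ d) {s t : ℝ} (hs : 0 ≤ s) (hst : s ≤ t) :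
    AG lam d t ≤ AG lam d s := by
  rw [AG_split hlam hd hs hst]
  have : 0 ≤ ∫ u in Set.Ioc s t, phiG lam d u :=
    setIntegral_nonneg measurableSet_Ioc fun u hu => phiG_nonneg (hs.trans (le_of_lt hu.1))
  linarith

lemma AG_tendsto_zero (hlam : 0 < lam) (hd : 1 ≤ d) :
    Tendsto (AG lam d) atTop (nhds 0) := by
  have hkey : Tendsto (fun t : ℝ => ∫ u in (0:ℝ)..t, phiG lam d u) atTop
      (nhds (AG lam d 0)) :=
    intervalIntegral_tendsto_integral_Ioi 0 (integrableOn_phiG hlam hd le_rfl) tendsto_id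
  have : Tendsto (fun t : ℝ => AG lam d 0 - ∫ u in (0:ℝ)..t, phiG lam d u) atTop
      (nhds (AG lam d 0 - AG lam d 0)) := (tendsto_const_nhds).sub hkey
  rw [sub_self] at this
  refine this.congr' ?_
  filter_upwards [eventually_ge_atTop (0:ℝ)] with t ht
  rw [intervalIntegral.integral_of_le ht]
  have := AG_split hlam hd le_rfl ht
  linarith

lemma AG_continuousOn (hlam : 0 < lam) (hd : 1 ≤ d) :
    ContinuousOn (AG lam d) (Set.Ici 0) := by
  have hF : Continuous (fun t : ℝ => ∫ u in (0:ℝ)..t, phiG lam d u) :=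
    intervalIntegral.continuous_primitive
      (fun a b => (continuous_phiG (lam := lam) (d := d)).intervalIntegrable a b) 0
  refine ContinuousOn.congr (f := fun t => AG lam d 0 - ∫ u in (0:ℝ)..t, phiG lam d u)
    ((continuous_const.sub hF).continuousOn) ?_
  intro t ht
  simp only
  rw [intervalIntegral.integral_of_le ht]
  have := AG_split hlam hd le_rfl ht
  linarith

/-- `gG lam u * exp (lam * u) → 1` as `u → ∞`. -/
lemma gG_mul_exp_tendsto (hlam : 0 < lam) :
    Tendsto (fun u : ℝ => gG lam u * Real.exp (lam * u)) atTop (nhds 1) := by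
  have hF : HasDerivAt (fun x : ℝ => 1 - Real.exp (-x)) 1 0 := by
    have : HasDerivAt (fun x : ℝ => 1 - Real.exp (-x)) (0 - Real.exp (-0) * (-1)) 0 := by
      exact (hasDerivAt_const _ _).sub (((Real.hasDerivAt_exp (-0)).comp 0 ((hasDerivAt_id 0).neg)))
    simpa using this
  have hslope := hasDerivAt_iff_tendsto_slope.mp hF
  have hx : Tendsto (fun u : ℝ => Real.exp (-lam * u)) atTop (nhdsWithin 0 {0}ᶜ) := by
    rw [tendsto_nhdsWithin_iff]
    constructor
    · refine Real.tendsto_exp_atBot.comp ?_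
      have h1 : Tendsto (fun u : ℝ => lam * u) atTop atTop :=
        Tendsto.const_mul_atTop hlam tendsto_id
      have h2 : Tendsto (fun u : ℝ => -(lam * u)) atTop atBot := tendsto_neg_atBot_iff.mpr h1
      exact h2.congr fun u => by ring
    · exact Eventually.of_forall fun u => (Real.exp_pos _).ne'
  have := hslope.comp hx
  refine this.congr fun u => ?_
  have h1 : (Real.exp (-lam * u))⁻¹ = Real.exp (lam * u) := by
    rw [← Real.exp_neg]; congr 1; ring
  simp only [Function.comp, slope_def_field, sub_zero, neg_zero, Real.exp_zero]
  rw [div_eq_mul_inv, h1]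
  simp [gG]

lemma indicator_shift (s t : ℝ) (f : ℝ → ℝ) (u : ℝ) :
    (Set.Ioi t).indicator (fun u => f (u + s)) u = (Set.Ioi (t + s)).indicator f (u + s) := by
  by_cases h : u ∈ Set.Ioi t
  · rw [Set.indicator_of_mem h, Set.indicator_of_mem (by simpa using add_lt_add_right h s)]
  · rw [Set.indicator_of_notMem h, Set.indicator_of_notMem (by simp at h ⊢; linarith)]

lemma integral_Ioi_shift (s t : ℝ) (f : ℝ → ℝ) :
    (∫ u in Set.Ioi t, f (u + s)) = ∫ u in Set.Ioi (t + s), f u := by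
  rw [← integral_indicator measurableSet_Ioi, ← integral_indicator measurableSet_Ioi]
  rw [show ((Set.Ioi t).indicator fun u => f (u + s)) =
      (fun u => (Set.Ioi (t + s)).indicator f (u + s)) from funext (indicator_shift s t f)]
  exact integral_add_right_eq_self _ s

lemma integrableOn_shift {s t : ℝ} {f : ℝ → ℝ} (hf : IntegrableOn f (Set.Ioi (t + s))) :
    IntegrableOn (fun u => f (u + s)) (Set.Ioi t) := by
  have h2 : Integrable ((Set.Ioi (t + s)).indicator f) volume :=
    (integrable_indicator_iff measurableSet_Ioi).mpr hf
  have h3 := h2.comp_add_right s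
  have h4 : Integrable ((Set.Ioi t).indicator fun u => f (u + s)) volume :=
    h3.congr (Eventually.of_forall fun u => (indicator_shift s t f u).symm)
  exact (integrable_indicator_iff measurableSet_Ioi).mp h4

/-- the pointwise ratio limit for `phiG`. -/
lemma phiG_ratio_tendsto (hlam : 0 < lam) (s : ℝ) :
    Tendsto (fun u : ℝ => phiG lam d (u + s) / phiG lam d u) atTop
      (nhds (Real.exp (-(lam * s)))) := by
  have hH : Tendsto (fun u : ℝ => gG lam u * Real.exp (lam * u)) atTop (nhds 1) :=
    gG_mul_exp_tendsto hlam
  -- ratio of H's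
  have hHs : Tendsto (fun u : ℝ => gG lam (u + s) * Real.exp (lam * (u + s))) atTop (nhds 1) :=
    hH.comp (tendsto_atTop_add_const_right atTop s tendsto_id)
  have hq3 : Tendsto (fun u : ℝ => (gG lam (u + s) * Real.exp (lam * (u + s))) /
      (gG lam u * Real.exp (lam * u))) atTop (nhds 1) := by
    have h := hHs.div hH one_ne_zero; rw [div_one] at h; exact h
  -- ratio of powers
  have hq1 : Tendsto (fun u : ℝ => ((u + s) / u) ^ (d - 1)) atTop (nhds 1) := by
    have hbase : Tendsto (fun u : ℝ => (u + s) / u) atTop (nhds 1) := by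
      have : Tendsto (fun u : ℝ => 1 + s / u) atTop (nhds (1 + 0)) :=
        tendsto_const_nhds.add (tendsto_const_nhds.div_atTop tendsto_id)
      rw [add_zero] at this
      refine this.congr' ?_
      filter_upwards [eventually_gt_atTop (0:ℝ)] with u hu
      field_simp
    simpa using hbase.pow (d - 1)
  have hmain : Tendsto (fun u : ℝ => ((u + s) / u) ^ (d - 1) *
      ((gG lam (u + s) * Real.exp (lam * (u + s))) / (gG lam u * Real.exp (lam * u))) *
      Real.exp (-(lam * s))) atTop (nhds (Real.exp (-(lam * s)))) := by
    simpa using (hq1.mul hq3).mul_const (Real.exp (-(lam * s)))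
  refine hmain.congr' ?_
  filter_upwards [eventually_gt_atTop (max 0 (-s))] with u hu
  have hu0 : 0 < u := lt_of_le_of_lt (le_max_left _ _) hu
  have hus : 0 < u + s := by have := lt_of_le_of_lt (le_max_right _ _) hu; linarith
  have hgu : gG lam u > 0 := gG_pos u
  have hgus : gG lam (u + s) > 0 := gG_pos (u + s)
  have heu : Real.exp (lam * u) > 0 := Real.exp_pos _
  have heus : Real.exp (lam * (u + s)) > 0 := Real.exp_pos _
  rw [phiG, phiG]
  have hexp : Real.exp (-(lam * s)) = Real.exp (lam * u) / Real.exp (lam * (u + s)) := by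
    rw [← Real.exp_sub]; congr 1; ring
  rw [hexp]
  rw [div_pow]
  field_simp

lemma AG_ratio_tendsto (hlam : 0 < lam) (hd : 1 ≤ d) (s : ℝ) :
    Tendsto (fun t : ℝ => AG lam d (t + s) / AG lam d t) atTop
      (nhds (Real.exp (-(lam * s)))) := by
  rw [Metric.tendsto_atTop]
  intro ε hε
  set L := Real.exp (-(lam * s)) with hL
  have hrat := phiG_ratio_tendsto (d := d) hlam s
  have hev : ∃ T₀ : ℝ, ∀ u ≥ T₀, |phiG lam d (u + s) / phiG lam d u - L| < ε / 2 := by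
    obtain ⟨T₀, hT₀⟩ := Metric.tendsto_atTop.mp hrat (ε / 2) (by linarith)
    exact ⟨T₀, fun u hu => by simpa [Real.dist_eq, hL] using hT₀ u hu⟩
  obtain ⟨T₀, hT₀⟩ := hev
  refine ⟨max T₀ (max 0 (-s)) + 1, fun t ht => ?_⟩
  have ht0 : 0 ≤ t := by
    have := le_trans (le_max_left 0 (-s)) (le_max_right T₀ _); linarith
  have hts : 0 ≤ t + s := by
    have := le_trans (le_max_right 0 (-s)) (le_max_right T₀ _); linarith
  have hAt : 0 < AG lam d t := AG_pos hlam hd ht0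
  have hInt : IntegrableOn (phiG lam d) (Set.Ioi t) := integrableOn_phiG hlam hd ht0
  have hIntS : IntegrableOn (fun u => phiG lam d (u + s)) (Set.Ioi t) :=
    integrableOn_shift (integrableOn_phiG hlam hd hts)
  have hpt : ∀ u ∈ Set.Ioi t, (L - ε / 2) * phiG lam d u ≤ phiG lam d (u + s) ∧
      phiG lam d (u + s) ≤ (L + ε / 2) * phiG lam d u := by
    intro u hu
    have hu' : u > t := hu
    have huT : u ≥ T₀ := by
      have := le_max_left T₀ (max 0 (-s)); linarith
    have hu0 : 0 < u := by
      have := le_trans (le_max_left 0 (-s)) (le_max_right T₀ _); linarith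
    have hφu : 0 < phiG lam d u := phiG_pos hu0
    have habs := hT₀ u huT
    rw [abs_lt] at habs
    have heq : phiG lam d (u + s) = phiG lam d (u + s) / phiG lam d u * phiG lam d u :=
      (div_mul_cancel₀ _ hφu.ne').symm
    constructor
    · rw [heq]; exact mul_le_mul_of_nonneg_right (by linarith [habs.1]) hφu.le
    · rw [heq]; exact mul_le_mul_of_nonneg_right (by linarith [habs.2]) hφu.le
  have hup : AG lam d (t + s) ≤ (L + ε / 2) * AG lam d t := by
    have h1 : AG lam d (t + s) = ∫ u in Set.Ioi t, phiG lam d (u + s) :=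
      (integral_Ioi_shift s t (phiG lam d)).symm
    rw [h1, AG, ← integral_const_mul]
    exact setIntegral_mono_on hIntS (hInt.const_mul _) measurableSet_Ioi
      (fun u hu => (hpt u hu).2)
  have hlo : (L - ε / 2) * AG lam d t ≤ AG lam d (t + s) := by
    have h1 : AG lam d (t + s) = ∫ u in Set.Ioi t, phiG lam d (u + s) :=
      (integral_Ioi_shift s t (phiG lam d)).symm
    rw [h1, AG, ← integral_const_mul]
    exact setIntegral_mono_on (hInt.const_mul _) hIntS measurableSet_Ioi
      (fun u hu => (hpt u hu).1)
  rw [Real.dist_eq, abs_lt]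
  have hub : AG lam d (t + s) / AG lam d t ≤ L + ε / 2 := (div_le_iff₀ hAt).mpr hup
  have hlb : L - ε / 2 ≤ AG lam d (t + s) / AG lam d t := (le_div_iff₀ hAt).mpr hlo
  constructor <;> linarith

lemma exists_bseq (hlam : 0 < lam) (hd : 1 ≤ d) (n : ℕ) (hn : 1 ≤ n) :
    ∃ t : ℝ, 0 ≤ t ∧ AG lam d t = AG lam d 1 / (n : ℝ) ^ d := by
  set y := AG lam d 1 / (n : ℝ) ^ d with hy
  have hn1 : (1 : ℝ) ≤ (n : ℝ) ^ d := one_le_pow₀ (Nat.one_le_cast.mpr hn)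
  have hA1 : 0 < AG lam d 1 := AG_pos hlam hd zero_le_one
  have hy0 : 0 < y := div_pos hA1 (by linarith)
  have hyA1 : y ≤ AG lam d 1 := div_le_self hA1.le hn1
  have hyA0 : y ≤ AG lam d 0 := hyA1.trans (AG_anti hlam hd le_rfl zero_le_one)
  obtain ⟨T₀, hT₀⟩ := eventually_atTop.mp
    ((AG_tendsto_zero hlam hd).eventually_lt_const hy0)
  set T := max T₀ 0 with hT
  have hT0 : 0 ≤ T := le_max_right _ _
  have hAT : AG lam d T < y := hT₀ T (le_max_left _ _)
  have hsub : Set.Icc (AG lam d T) (AG lam d 0) ⊆ AG lam d '' Set.Icc 0 T :=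
    intermediate_value_Icc' hT0 ((AG_continuousOn hlam hd).mono Set.Icc_subset_Ici_self)
  obtain ⟨t, htmem, hteq⟩ := hsub ⟨hAT.le, hyA0⟩
  exact ⟨t, htmem.1, hteq⟩

end AuxGumbel

/-- **Appendix Lemma, Gumbel case (G1).**
For `g(z) = 1 - exp(-e^(-λ‖z‖))` on `ℝ^d` (Euclidean norm), `λ > 0`, `ρ > 0`, there exist
sequences `(c_n)`, `(b_n)` and a constant `C > 0` depending only on `ρ`, `d` and `λ` such
that for every `r ∈ ℝ`, `n^d · ρ ∫_{‖z‖ > c_n r + b_n} g(z) dz → C e^(-r)` as `n → ∞`. -/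
theorem tail_integral_gumbel_one
    (d : ℕ) (hd : 1 ≤ d) (ρ : ℝ) (hρ : 0 < ρ) (lam : ℝ) (hlam : 0 < lam) :
    ∃ c b : ℕ → ℝ, ∃ C : ℝ, 0 < C ∧
      ∀ r : ℝ,
        Tendsto
          (fun n : ℕ => (n : ℝ) ^ d *
            (ρ * ∫ z in {z : EuclideanSpace ℝ (Fin d) | c n * r + b n < ‖z‖},
              (1 - Real.exp (-Real.exp (-lam * ‖z‖)))))
          atTop (nhds (C * Real.exp (-r))) := by
  classical
  set E := EuclideanSpace ℝ (Fin d) with hE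
  haveI : Nontrivial E :=
    Module.nontrivial_of_finrank_pos (R := ℝ)
      (by show 0 < Module.finrank ℝ (EuclideanSpace ℝ (Fin d)); rw [finrank_euclideanSpace_fin]; omega)
  set κ' : ℝ := (volume (Metric.ball (0 : E) 1)).toReal with hκ'
  have hκ'pos : 0 < κ' := ENNReal.toReal_pos (Metric.measure_ball_pos volume 0 one_pos).ne'
    measure_ball_lt_top.ne
  set κ : ℝ := (d : ℝ) * κ' with hκ
  have hκpos : 0 < κ := mul_pos (by exact_mod_cast Nat.lt_of_lt_of_le Nat.zero_lt_one hd) hκ'pos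
  -- polar coordinates
  have hpolar : ∀ t : ℝ, 0 ≤ t →
      (∫ z in {z : E | t < ‖z‖}, (1 - Real.exp (-Real.exp (-lam * ‖z‖)))) = κ * AG lam d t := by
    intro t ht
    have hmeas : MeasurableSet {z : E | t < ‖z‖} :=
      (isOpen_lt continuous_const continuous_norm).measurableSet
    rw [← integral_indicator hmeas]
    have h1 : (fun z : E => {z : E | t < ‖z‖}.indicator
        (fun z : E => 1 - Real.exp (-Real.exp (-lam * ‖z‖))) z)
        = fun z : E => (Set.Ioi t).indicator (gG lam) ‖z‖ := by
      funext z
      exact Set.indicator_comp_right (fun z : E => ‖z‖)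
        (s := Set.Ioi t) (g := gG lam) (x := z)
    rw [h1, integral_fun_norm_addHaar volume ((Set.Ioi t).indicator (gG lam))]
    have hdim : Module.finrank ℝ E = d := finrank_euclideanSpace_fin
    rw [hdim, nsmul_eq_mul, smul_eq_mul]
    have h2 : (∫ y in Set.Ioi (0:ℝ), y ^ (d - 1) • (Set.Ioi t).indicator (gG lam) y)
        = AG lam d t := by
      have h3 : (fun y : ℝ => y ^ (d - 1) • (Set.Ioi t).indicator (gG lam) y)
          = fun y : ℝ => (Set.Ioi t).indicator (phiG lam d) y := by
        funext y
        by_cases hy : y ∈ Set.Ioi t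
        · simp [Set.indicator_of_mem hy, phiG, smul_eq_mul]
        · simp [Set.indicator_of_notMem hy]
      rw [h3, setIntegral_indicator measurableSet_Ioi, Set.Ioi_inter_Ioi,
        max_eq_right ht]
      rfl
    rw [h2, hκ, hκ', measureReal_def]
    ring
  -- the sequences
  have hex : ∀ n : ℕ, ∃ t : ℝ, 0 ≤ t ∧ (1 ≤ n → AG lam d t = AG lam d 1 / (n : ℝ) ^ d) := by
    intro n
    by_cases hn : 1 ≤ n
    · obtain ⟨t, ht0, hteq⟩ := exists_bseq hlam hd n hn
      exact ⟨t, ht0, fun _ => hteq⟩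
    · exact ⟨0, le_rfl, fun h => absurd h hn⟩
  choose b hb0 hbeq using hex
  have hA1 : 0 < AG lam d 1 := AG_pos hlam hd zero_le_one
  -- b tends to infinity
  have hbtop : Tendsto b atTop atTop := by
    rw [tendsto_atTop]
    intro M
    have hP : 0 < AG lam d (max M 0 + 1) := AG_pos hlam hd (by positivity)
    have hpow : Tendsto (fun n : ℕ => ((n : ℝ)) ^ d) atTop atTop :=
      (tendsto_pow_atTop (by omega)).comp tendsto_natCast_atTop_atTop
    have h1 : Tendsto (fun n : ℕ => AG lam d 1 / (n : ℝ) ^ d) atTop (nhds 0) :=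
      tendsto_const_nhds.div_atTop hpow
    filter_upwards [h1.eventually_lt_const hP, eventually_ge_atTop 1] with n hn1 hn2
    by_contra hcon
    push_neg at hcon
    have hble : b n ≤ max M 0 + 1 := by
      have : M ≤ max M 0 + 1 := by
        have := le_max_left M 0; linarith
      linarith
    have := AG_anti hlam hd (hb0 n) hble
    rw [hbeq n hn2] at this
    linarith
  refine ⟨fun _ => lam⁻¹, b, ρ * κ * AG lam d 1, by positivity, ?_⟩
  intro r
  set s := lam⁻¹ * r with hs
  have hratio : Tendsto (fun n : ℕ => AG lam d (b n + s) / AG lam d (b n)) atTop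
      (nhds (Real.exp (-(lam * s)))) :=
    (AG_ratio_tendsto hlam hd s).comp hbtop
  have hexp : Real.exp (-(lam * s)) = Real.exp (-r) := by
    rw [hs]; congr 1
    rw [← mul_assoc, mul_inv_cancel₀ hlam.ne', one_mul]
  have hmain : Tendsto (fun n : ℕ => ρ * κ * AG lam d 1 *
      (AG lam d (b n + s) / AG lam d (b n))) atTop
      (nhds (ρ * κ * AG lam d 1 * Real.exp (-r))) := by
    rw [← hexp]
    exact hratio.const_mul _
  refine hmain.congr' ?_
  filter_upwards [eventually_ge_atTop 1, hbtop.eventually_ge_atTop (-s)] with n hn1 hns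
  have hts : 0 ≤ s + b n := by linarith
  have hAbn : 0 < AG lam d (b n) := AG_pos hlam hd (hb0 n)
  have hAeq : AG lam d (b n) = AG lam d 1 / (n : ℝ) ^ d := hbeq n hn1
  have hnd : (0:ℝ) < (n : ℝ) ^ d := by positivity
  have hnpow : (n : ℝ) ^ d = AG lam d 1 / AG lam d (b n) := by
    rw [hAeq]; field_simp
  have harg : lam⁻¹ * r + b n = s + b n := by rw [hs]
  calc ρ * κ * AG lam d 1 * (AG lam d (b n + s) / AG lam d (b n))
      = (n : ℝ) ^ d * (ρ * (κ * AG lam d (s + b n))) := by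
        rw [hnpow, add_comm (b n) s]; field_simp
    _ = (n : ℝ) ^ d * (ρ * ∫ z in {z : E | lam⁻¹ * r + b n < ‖z‖},
          (1 - Real.exp (-Real.exp (-lam * ‖z‖)))) := by
        rw [harg, hpolar (s + b n) hts]
end

section
/- Let d ≥ 1, ρ > 0 and M, α ∈ (0, ∞), and let g : ℝ^d → [0,1] be given by g(z) = M^{−α}(M − ‖z‖)^α·1{‖z‖ ≤ M}, where ‖·‖ is the Euclidean norm on ℝ^d. Set c_n = n^{−d/(α+1)} and b_n = M. Then there exists a constant C > 0, depending only on ρ, d and α, such that for every r ≤ 0, lim_{n→∞} n^d · ρ ∫_{{z ∈ ℝ^d : ‖z‖ > c_n r + M}} g(z) dz = C·(−r)^{α+1}. -/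
open Filter MeasureTheory Set Metric

/-- **Appendix Lemma, Weibull case (W).**
For `g(z) = M^(-α)(M - ‖z‖)^α 1{‖z‖ ≤ M}` on `ℝ^d` (Euclidean norm), `M, α > 0`, `ρ > 0`,
with `c_n = n^(-d/(α+1))` and `b_n = M`, there is a constant `C > 0` depending only on
`ρ`, `d` and `α` such that for every `r ≤ 0`,
`n^d · ρ ∫_{‖z‖ > c_n r + M} g(z) dz → C (-r)^(α+1)` as `n → ∞`. -/
theorem tail_integral_weibull
    (d : ℕ) (hd : 1 ≤ d) (ρ : ℝ) (hρ : 0 < ρ) (M α : ℝ) (hM : 0 < M) (hα : 0 < α) :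
    ∃ C : ℝ, 0 < C ∧
      ∀ r : ℝ, r ≤ 0 →
        Tendsto
          (fun n : ℕ => (n : ℝ) ^ d *
            (ρ * ∫ z in {z : EuclideanSpace ℝ (Fin d) |
                (n : ℝ) ^ (-(d : ℝ) / (α + 1)) * r + M < ‖z‖},
              (if ‖z‖ ≤ M then M ^ (-α) * (M - ‖z‖) ^ α else 0)))
          atTop (nhds (C * (-r) ^ (α + 1))) := by
  haveI : Nonempty (Fin d) := Fin.pos_iff_nonempty.mp hd
  haveI : Nontrivial (EuclideanSpace ℝ (Fin d)) := inferInstance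
  set E := EuclideanSpace ℝ (Fin d)
  set ω : ℝ := (volume (ball (0 : E) 1)).toReal with hω_def
  have hω : 0 < ω :=
    ENNReal.toReal_pos (ne_of_gt (measure_ball_pos _ _ one_pos)) measure_ball_lt_top.ne
  have hα1 : (0:ℝ) < α + 1 := by linarith
  refine ⟨ρ * ((d : ℝ) * ω * M ^ (d - 1) * M ^ (-α) / (α + 1)), by positivity, ?_⟩
  intro r hr
  set rr : ℝ := -r with hrr_def
  have hrr : 0 ≤ rr := by simp [hrr_def]; linarith
  set c : ℕ → ℝ := fun n => (n : ℝ) ^ (-(d : ℝ) / (α + 1)) with hc_def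
  have hc_nonneg : ∀ n, 0 ≤ c n := fun n => Real.rpow_nonneg (Nat.cast_nonneg n) _
  set s : ℕ → ℝ := fun n => c n * r + M with hs_def
  have hsM : ∀ n, s n ≤ M := by
    intro n
    have : c n * r ≤ 0 := mul_nonpos_of_nonneg_of_nonpos (hc_nonneg n) hr
    simp only [hs_def]; linarith
  have hsε : ∀ n, M - s n = c n * rr := by
    intro n; simp only [hs_def, hrr_def]; ring
  -- c n → 0 and s n → M
  have hc0 : Tendsto c atTop (nhds 0) := by
    have h1 : Tendsto (fun x : ℝ => x ^ (-((d:ℝ) / (α + 1)))) atTop (nhds 0) :=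
      tendsto_rpow_neg_atTop (by positivity)
    have := h1.comp tendsto_natCast_atTop_atTop (α := ℕ)
    simpa [hc_def, Function.comp_def, neg_div] using this
  have hs_lim : Tendsto s atTop (nhds M) := by
    have := (hc0.mul_const r).add_const M
    simpa [hs_def] using this
  -- the value Q
  set Q : ℝ := M ^ (-α) * rr ^ (α + 1) / (α + 1) with hQ_def
  have hQ : 0 ≤ Q := by
    have := Real.rpow_nonneg hrr (α + 1)
    have h2 := Real.rpow_nonneg hM.le (-α)
    positivity
  -- key computation for n with 1 ≤ n and M/2 ≤ s n
  have key : ∀ n : ℕ, 1 ≤ n → M / 2 ≤ s n →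
      ρ * (d : ℝ) * ω * ((s n) ^ (d-1) * Q) ≤
        (n : ℝ) ^ d *
          (ρ * ∫ z in {z : E | c n * r + M < ‖z‖},
            (if ‖z‖ ≤ M then M ^ (-α) * (M - ‖z‖) ^ α else 0)) ∧
      (n : ℝ) ^ d *
          (ρ * ∫ z in {z : E | c n * r + M < ‖z‖},
            (if ‖z‖ ≤ M then M ^ (-α) * (M - ‖z‖) ^ α else 0)) ≤
        ρ * (d : ℝ) * ω * (M ^ (d-1) * Q) := by
    intro n hn1 hsn
    have hs_pos : 0 < s n := lt_of_lt_of_le (by linarith) hsn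
    have hsnM : s n ≤ M := hsM n
    -- step 1 : polar coordinates
    have hset : MeasurableSet {z : E | c n * r + M < ‖z‖} :=
      measurableSet_lt measurable_const (by fun_prop)
    have hind : ∀ z : E,
        ({z : E | c n * r + M < ‖z‖}).indicator
          (fun z => if ‖z‖ ≤ M then M ^ (-α) * (M - ‖z‖) ^ α else 0) z
        = (Ioc (s n) M).indicator (fun y => M ^ (-α) * (M - y) ^ α) ‖z‖ := by
      intro z
      by_cases h1 : ‖z‖ ∈ Ioc (s n) M
      · rw [Set.indicator_of_mem h1, Set.indicator_of_mem (by exact h1.1)]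
        rw [if_pos h1.2]
      · rw [Set.indicator_of_notMem h1]
        rw [Set.mem_Ioc, not_and_or] at h1
        rcases h1 with h1 | h1
        · rw [Set.indicator_of_notMem (by exact h1)]
        · rw [Set.indicator_apply]
          split_ifs <;> simp_all
    have polar :
        (∫ z in {z : E | c n * r + M < ‖z‖},
            (if ‖z‖ ≤ M then M ^ (-α) * (M - ‖z‖) ^ α else 0))
        = (d : ℝ) * ω * ∫ y in (s n)..M, y ^ (d-1) * (M ^ (-α) * (M - y) ^ α) := by
      rw [← integral_indicator hset]
      rw [show (fun z : E => ({z : E | c n * r + M < ‖z‖}).indicator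
            (fun z => if ‖z‖ ≤ M then M ^ (-α) * (M - ‖z‖) ^ α else 0) z)
          = (fun z : E => (fun y : ℝ => (Ioc (s n) M).indicator
              (fun y => M ^ (-α) * (M - y) ^ α) y) ‖z‖) from funext hind]
      rw [MeasureTheory.integral_fun_norm_addHaar volume
        (fun y : ℝ => (Ioc (s n) M).indicator (fun y => M ^ (-α) * (M - y) ^ α) y)]
      rw [finrank_euclideanSpace_fin]
      have h3 : (fun y : ℝ => y ^ (d-1) • (Ioc (s n) M).indicator
          (fun y => M ^ (-α) * (M - y) ^ α) y)
          = (Ioc (s n) M).indicator (fun y => y ^ (d-1) * (M ^ (-α) * (M - y) ^ α)) := by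
        funext y
        by_cases h : y ∈ Ioc (s n) M
        · simp [Set.indicator_of_mem h]
        · simp [Set.indicator_of_notMem h]
      rw [h3, MeasureTheory.setIntegral_indicator measurableSet_Ioc]
      rw [show Ioi (0:ℝ) ∩ Ioc (s n) M = Ioc (s n) M from
        Set.inter_eq_right.mpr (fun y hy => lt_trans hs_pos hy.1)]
      rw [intervalIntegral.integral_of_le hsnM]
      rw [nsmul_eq_mul, smul_eq_mul]
      rw [show ω = volume.real (ball (0:E) 1) from rfl]
      ring
    -- integrability
    have hcont : Continuous (fun y : ℝ => (M - y) ^ α) := by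
      rw [continuous_iff_continuousAt]
      intro x
      exact (Real.continuousAt_rpow_const _ _ (Or.inr hα.le)).comp (by fun_prop)
    have hint1 : IntervalIntegrable (fun y : ℝ => y ^ (d-1) * (M ^ (-α) * (M - y) ^ α))
        volume (s n) M :=
      ((continuous_pow _).mul (continuous_const.mul hcont)).intervalIntegrable _ _
    have hint2 : IntervalIntegrable (fun y : ℝ => M ^ (d-1) * (M ^ (-α) * (M - y) ^ α))
        volume (s n) M :=
      (continuous_const.mul (continuous_const.mul hcont)).intervalIntegrable _ _
    have hint3 : IntervalIntegrable (fun y : ℝ => (s n) ^ (d-1) * (M ^ (-α) * (M - y) ^ α))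
        volume (s n) M :=
      (continuous_const.mul (continuous_const.mul hcont)).intervalIntegrable _ _
    -- the base integral K
    have hK : ∫ y in (s n)..M, M ^ (-α) * (M - y) ^ α
        = M ^ (-α) * ((c n * rr) ^ (α+1) / (α + 1)) := by
      rw [intervalIntegral.integral_const_mul]
      rw [show (fun y : ℝ => (M - y) ^ α) = (fun y : ℝ => (fun x : ℝ => x ^ α) (M - y)) from rfl]
      rw [intervalIntegral.integral_comp_sub_left (fun x : ℝ => x ^ α) M]
      rw [integral_rpow (Or.inl (by linarith))]
      rw [sub_self, Real.zero_rpow (by positivity), hsε n]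
      ring
    -- bounds on J
    have hbound_up : ∫ y in (s n)..M, y ^ (d-1) * (M ^ (-α) * (M - y) ^ α)
        ≤ M ^ (d-1) * (M ^ (-α) * ((c n * rr) ^ (α+1) / (α + 1))) := by
      rw [← hK, ← intervalIntegral.integral_const_mul]
      refine intervalIntegral.integral_mono_on hsnM hint1 hint2 (fun y hy => ?_)
      have hy0 : 0 ≤ y := le_trans hs_pos.le hy.1
      refine mul_le_mul_of_nonneg_right (pow_le_pow_left₀ hy0 hy.2 _) ?_
      exact mul_nonneg (Real.rpow_nonneg hM.le _) (Real.rpow_nonneg (by linarith [hy.2]) _)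
    have hbound_lo : (s n) ^ (d-1) * (M ^ (-α) * ((c n * rr) ^ (α+1) / (α + 1)))
        ≤ ∫ y in (s n)..M, y ^ (d-1) * (M ^ (-α) * (M - y) ^ α) := by
      rw [← hK, ← intervalIntegral.integral_const_mul]
      refine intervalIntegral.integral_mono_on hsnM hint3 hint1 (fun y hy => ?_)
      refine mul_le_mul_of_nonneg_right (pow_le_pow_left₀ hs_pos.le hy.1 _) ?_
      exact mul_nonneg (Real.rpow_nonneg hM.le _) (Real.rpow_nonneg (by linarith [hy.2]) _)
    -- n^d * (c n * rr)^(α+1) = rr^(α+1)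
    have hnpos : (0:ℝ) < (n:ℝ) := by exact_mod_cast hn1
    have hpow : (n:ℝ) ^ d * (c n * rr) ^ (α+1) = rr ^ (α+1) := by
      have h1 : (c n) ^ (α+1) = (n:ℝ) ^ (-(d:ℝ)) := by
        rw [show c n = (n:ℝ) ^ (-(d:ℝ)/(α+1)) from rfl,
          ← Real.rpow_mul (Nat.cast_nonneg n), div_mul_cancel₀ _ (ne_of_gt hα1)]
      rw [Real.mul_rpow (hc_nonneg n) hrr, h1, ← mul_assoc,
        ← Real.rpow_natCast (n:ℝ) d, ← Real.rpow_add hnpos,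
        show (d:ℝ) + -(d:ℝ) = 0 from by ring, Real.rpow_zero, one_mul]
    have hnd : (0:ℝ) ≤ (n:ℝ) ^ d := by positivity
    constructor
    · rw [polar]
      calc ρ * (d : ℝ) * ω * ((s n) ^ (d-1) * Q)
          = (n:ℝ)^d * (ρ * ((d:ℝ) * ω *
              ((s n) ^ (d-1) * (M ^ (-α) * ((c n * rr) ^ (α+1) / (α + 1)))))) := by
            rw [hQ_def, ← hpow]; ring
        _ ≤ _ := by
            refine mul_le_mul_of_nonneg_left ?_ hnd
            refine mul_le_mul_of_nonneg_left ?_ hρ.le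
            refine mul_le_mul_of_nonneg_left hbound_lo (by positivity)
    · rw [polar]
      calc (n:ℝ)^d * (ρ * ((d : ℝ) * ω * ∫ y in (s n)..M, y ^ (d-1) * (M ^ (-α) * (M - y) ^ α)))
          ≤ (n:ℝ)^d * (ρ * ((d:ℝ) * ω *
              (M ^ (d-1) * (M ^ (-α) * ((c n * rr) ^ (α+1) / (α + 1)))))) := by
            refine mul_le_mul_of_nonneg_left ?_ hnd
            refine mul_le_mul_of_nonneg_left ?_ hρ.le
            exact mul_le_mul_of_nonneg_left hbound_up (by positivity)
        _ = ρ * (d : ℝ) * ω * (M ^ (d-1) * Q) := by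
            rw [hQ_def, ← hpow]; ring
    -- done
  -- now the squeeze
  have hlim_lo : Tendsto (fun n => ρ * (d : ℝ) * ω * ((s n) ^ (d-1) * Q)) atTop
      (nhds (ρ * ((d : ℝ) * ω * M ^ (d - 1) * M ^ (-α) / (α + 1)) * rr ^ (α + 1))) := by
    have h1 : Tendsto (fun n => (s n) ^ (d-1)) atTop (nhds (M ^ (d-1))) := hs_lim.pow _
    have := (h1.mul_const Q).const_mul (ρ * (d:ℝ) * ω)
    convert this using 2
    rw [hQ_def]; ring
  have hlim_up : Tendsto (fun _ : ℕ => ρ * (d : ℝ) * ω * (M ^ (d-1) * Q)) atTop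
      (nhds (ρ * ((d : ℝ) * ω * M ^ (d - 1) * M ^ (-α) / (α + 1)) * rr ^ (α + 1))) := by
    have : ρ * (d : ℝ) * ω * (M ^ (d-1) * Q)
        = ρ * ((d : ℝ) * ω * M ^ (d - 1) * M ^ (-α) / (α + 1)) * rr ^ (α + 1) := by
      rw [hQ_def]; ring
    rw [this]; exact tendsto_const_nhds
  have hev : ∀ᶠ n : ℕ in atTop, 1 ≤ n ∧ M / 2 ≤ s n := by
    filter_upwards [eventually_ge_atTop 1,
      hs_lim.eventually (eventually_ge_nhds (show M/2 < M by linarith))] with n h1 h2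
    exact ⟨h1, h2⟩
  refine tendsto_of_tendsto_of_tendsto_of_le_of_le' hlim_lo hlim_up ?_ ?_
  · filter_upwards [hev] with n hn
    exact (key n hn.1 hn.2).1
  · filter_upwards [hev] with n hn
    exact (key n hn.1 hn.2).2
end
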